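/- arXiv:1706.06506 — 2 statements merged into one kernel-verified Lean document; each statement's English description precedes it below -/
import Mathlib

section
/- Let Δ be a simplicial complex admitting a free action by the group G=ℤ/pℤ over a field k extending ℂ. Then for every i ≥ 1 and every j with 0 ≤ j ≤ p−1, dim_k k[Δ]_i^j = (1/p)·dim_k k[Δ]_i; moreover dim_k k[Δ]_0^0 = 1 and dim_k k[Δ]_0^j = 0 for 0 < j < p. -/
/-!
Common framework: abstract simplicial complexes on `Fin n`, their `f`- and `h`-vectors,
(relative) simplicial cohomology with field coefficients, free actions of `ℤ/pℤ` given by a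
permutation `e`, eigen-Betti numbers, Stanley--Reisner ideals and graded/equivariant pieces of
Artinian reductions.
-/

namespace GroupActionsSR

open scoped BigOperators

/-- An abstract simplicial complex on the vertex set `Fin n` (always containing `∅`). -/
structure SC (n : ℕ) where
  faces : Finset (Finset (Fin n))
  empty_mem : ∅ ∈ faces
  down_closed : ∀ σ ∈ faces, ∀ τ ⊆ σ, τ ∈ faces

variable {n : ℕ}

/-- `fnum Δ j` is the number of faces with `j` vertices, i.e. `f_{j-1}(Δ)`. -/
def fnum (Δ : SC n) (j : ℕ) : ℕ := (Δ.faces.filter fun σ => σ.card = j).card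

/-- the `h`-vector of a `(d-1)`-dimensional complex:
`h_i = ∑_{j=0}^i (-1)^{i-j} C(d-j, i-j) f_{j-1}`. -/
def hvec (Δ : SC n) (d i : ℕ) : ℤ :=
  ∑ j ∈ Finset.range (i + 1),
    (-1 : ℤ) ^ (i - j) * ((d - j).choose (i - j) : ℤ) * (fnum Δ j : ℤ)

/-- `Δ` has dimension `d - 1`. -/
def SC.hasDim (Δ : SC n) (d : ℕ) : Prop :=
  (∀ σ ∈ Δ.faces, σ.card ≤ d) ∧ ∃ σ ∈ Δ.faces, σ.card = d

/-- `Δ` is pure of dimension `d-1`. -/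
def SC.Pure (Δ : SC n) (d : ℕ) : Prop :=
  ∀ σ ∈ Δ.faces, ∃ τ ∈ Δ.faces, σ ⊆ τ ∧ τ.card = d

/-- the set of faces of the link of `σ` in `Δ`. -/
def linkF (Δ : SC n) (σ : Finset (Fin n)) : Finset (Finset (Fin n)) :=
  Δ.faces.filter fun τ => Disjoint σ τ ∧ σ ∪ τ ∈ Δ.faces

/-- the set of faces of the star of `σ` in `Δ`. -/
def starF (Δ : SC n) (σ : Finset (Fin n)) : Finset (Finset (Fin n)) :=
  Δ.faces.filter fun τ => σ ∪ τ ∈ Δ.faces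

/-- A free simplicial action of `ℤ/pℤ` on `Δ`, the generator acting by the permutation `e`:
`e^p = 1`, `e` maps faces to faces, and no nonempty face is mapped to itself by a
non-identity power. -/
def FreeActionBy (Δ : SC n) (e : Equiv.Perm (Fin n)) (p : ℕ) : Prop :=
  e ^ p = 1 ∧ (∀ σ ∈ Δ.faces, σ.image ⇑e ∈ Δ.faces) ∧
    ∀ σ ∈ Δ.faces, σ ≠ ∅ → ∀ l : ℕ, 0 < l → l < p → σ.image ⇑(e ^ l) ≠ σ

/-- A very free simplicial action of `ℤ/pℤ` on `Δ`:
`st σ ∩ st (g·σ) = {∅}` for all nonempty faces `σ` and non-identity `g`. -/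
def VeryFreeActionBy (Δ : SC n) (e : Equiv.Perm (Fin n)) (p : ℕ) : Prop :=
  e ^ p = 1 ∧ (∀ σ ∈ Δ.faces, σ.image ⇑e ∈ Δ.faces) ∧
    ∀ σ ∈ Δ.faces, σ ≠ ∅ → ∀ l : ℕ, 0 < l → l < p →
      ∀ τ, τ ∈ starF Δ σ → τ ∈ starF Δ (σ.image ⇑(e ^ l)) → τ = ∅

section Complexes

variable (R : Type*) [CommRing R]

/-- the faces of `F` which contain `S` and have `t` vertices.  These index a basis of the space
of relative simplicial `(t-1)`-cochains of the pair `(F, cost_F S)`. -/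
def RF (F : Finset (Finset (Fin n))) (S : Finset (Fin n)) (t : ℤ) : Type :=
  {σ : Finset (Fin n) // σ ∈ F ∧ S ⊆ σ ∧ (σ.card : ℤ) = t}

/-- the simplicial coboundary map on (relative) cochains. -/
noncomputable def cb (F : Finset (Finset (Fin n))) (S : Finset (Fin n)) (t : ℤ) :
    (RF F S t → R) →ₗ[R] (RF F S (t + 1) → R) where
  toFun f τ := ∑ v ∈ τ.1, (-1 : R) ^ (τ.1.filter (· < v)).card *
      (if h : τ.1.erase v ∈ F ∧ S ⊆ τ.1.erase v ∧ ((τ.1.erase v).card : ℤ) = t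
        then f ⟨τ.1.erase v, h⟩ else 0)
  map_add' f g := by
    funext τ
    simp only [Pi.add_apply]
    rw [← Finset.sum_add_distrib]
    refine Finset.sum_congr rfl fun v _ => ?_
    by_cases h : τ.1.erase v ∈ F ∧ S ⊆ τ.1.erase v ∧ ((τ.1.erase v).card : ℤ) = t
    · simp only [dif_pos h, Pi.add_apply, mul_add]; exact mul_add _ _ _
    · simp only [dif_neg h, mul_zero, add_zero]
  map_smul' c f := by
    funext τ
    simp only [Pi.smul_apply, smul_eq_mul, RingHom.id_apply, Finset.mul_sum]
    refine Finset.sum_congr rfl fun v _ => ?_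
    by_cases h : τ.1.erase v ∈ F ∧ S ⊆ τ.1.erase v ∧ ((τ.1.erase v).card : ℤ) = t
    · simp only [dif_pos h, Pi.smul_apply, smul_eq_mul]; exact mul_left_comm _ _ _
    · simp only [dif_neg h, mul_zero, smul_zero]

/-- the cohomology of a two-step complex `C1 → C2 → C3` at the middle spot. -/
abbrev cohOf {C1 C2 C3 : Type*} [AddCommGroup C1] [AddCommGroup C2] [AddCommGroup C3]
    [Module R C1] [Module R C2] [Module R C3]
    (d1 : C1 →ₗ[R] C2) (d2 : C2 →ₗ[R] C3) : Type _ :=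
  LinearMap.ker d2 ⧸ (LinearMap.range d1).comap (LinearMap.ker d2).subtype

open Classical in
/-- the endomorphism of `cohOf d1 d2` induced by a chain map `φ` at the middle spot
(junk value `0` if `φ` is not compatible with the complex). -/
noncomputable def cohEnd {C1 C2 C3 : Type*} [AddCommGroup C1] [AddCommGroup C2] [AddCommGroup C3]
    [Module R C1] [Module R C2] [Module R C3]
    (d1 : C1 →ₗ[R] C2) (d2 : C2 →ₗ[R] C3) (φ : C2 →ₗ[R] C2) :
    cohOf R d1 d2 →ₗ[R] cohOf R d1 d2 :=
  if h : (∀ x ∈ LinearMap.ker d2, φ x ∈ LinearMap.ker d2) ∧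
      (∀ x ∈ LinearMap.range d1, φ x ∈ LinearMap.range d1) then
    Submodule.mapQ _ _ (φ.restrict h.1)
      (fun x hx => by
        have hx' : (x : C2) ∈ LinearMap.range d1 := hx
        have := h.2 x.1 hx'
        exact this)
  else 0

/-- relative simplicial cohomology `H^t(F, cost_F S)` (living on faces of cardinality `t+1`);
for `S = ∅` this is reduced simplicial cohomology `H̃^t(F)`. -/
noncomputable abbrev cohm (F : Finset (Finset (Fin n))) (S : Finset (Fin n)) (t : ℤ) : Type _ :=
  cohOf R (cb R F S t) (cb R F S (t + 1))

end Complexes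

/-- the reduced Betti number `β_t(F) = dim_k H̃^t(F; k)`. -/
noncomputable def betti (k : Type*) [Field k] (F : Finset (Finset (Fin n))) (t : ℤ) : ℕ :=
  Module.finrank k (cohm k F ∅ t)

/-- `Δ` is Buchsbaum over `k`: it is pure of dimension `d-1` and
`β_i(lk σ) = 0` for all nonempty faces `σ` and all `i < dim lk σ`. -/
def Buchsbaum (k : Type*) [Field k] (Δ : SC n) (d : ℕ) : Prop :=
  Δ.Pure d ∧ ∀ σ ∈ Δ.faces, σ ≠ ∅ →
    ∀ i : ℤ, i < (d : ℤ) - (σ.card : ℤ) - 1 → betti k (linkF Δ σ) i = 0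

/-- the sign of the permutation that `e` induces on the (ordered) vertices of `σ`,
computed as `(-1)^(number of inversions)`. -/
def faceSign (e : Equiv.Perm (Fin n)) (σ : Finset (Fin n)) : ℤ :=
  (-1 : ℤ) ^ ((σ ×ˢ σ).filter fun q => q.1 < q.2 ∧ e q.2 < e q.1).card

/-- the action of the simplicial automorphism `e` on simplicial cochains:
`(e · f)(σ) = ε(e⁻¹, σ) f(e⁻¹ σ)`. -/
noncomputable def cact (k : Type*) [Field k] (e : Equiv.Perm (Fin n))
    (F : Finset (Finset (Fin n))) (S : Finset (Fin n)) (t : ℤ) :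
    (RF F S t → k) →ₗ[k] (RF F S t → k) where
  toFun f σ := faceSign e⁻¹ σ.1 •
      (if h : σ.1.image ⇑e⁻¹ ∈ F ∧ S ⊆ σ.1.image ⇑e⁻¹ ∧ ((σ.1.image ⇑e⁻¹).card : ℤ) = t
        then f ⟨σ.1.image ⇑e⁻¹, h⟩ else 0)
  map_add' f g := by
    funext σ
    simp only [Pi.add_apply]
    by_cases h : σ.1.image ⇑e⁻¹ ∈ F ∧ S ⊆ σ.1.image ⇑e⁻¹ ∧ ((σ.1.image ⇑e⁻¹).card : ℤ) = t
    · simp only [dif_pos h, Pi.add_apply, smul_add]; exact smul_add _ _ _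
    · simp only [dif_neg h, smul_zero, add_zero]
  map_smul' c f := by
    funext σ
    simp only [Pi.smul_apply, RingHom.id_apply]
    by_cases h : σ.1.image ⇑e⁻¹ ∈ F ∧ S ⊆ σ.1.image ⇑e⁻¹ ∧ ((σ.1.image ⇑e⁻¹).card : ℤ) = t
    · simp only [dif_pos h, Pi.smul_apply]
      rw [smul_comm]; rfl
    · simp only [dif_neg h, smul_zero]

/-- the dimension of the `μ`-eigenspace of `f`. -/
noncomputable def eigenDim (k : Type*) [Field k] {M : Type*} [AddCommGroup M] [Module k M]
    (f : M →ₗ[k] M) (μ : k) : ℕ :=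
  Module.finrank k (LinearMap.ker (f - μ • LinearMap.id))

/-- the action induced by `e` on reduced simplicial cohomology `H̃^t(F; k)`. -/
noncomputable def cohAction (k : Type*) [Field k] (e : Equiv.Perm (Fin n))
    (F : Finset (Finset (Fin n))) (t : ℤ) : cohm k F ∅ t →ₗ[k] cohm k F ∅ t :=
  cohEnd k (cb k F ∅ t) (cb k F ∅ (t + 1)) (cact k e F ∅ (t + 1))

/-- the refined Betti number `β_t(F)^μ`: the dimension of the `μ`-eigenspace of the action of
the generator `e` on `H̃^t(F; k)`. -/
noncomputable def bettiEig (k : Type*) [Field k] (e : Equiv.Perm (Fin n))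
    (F : Finset (Finset (Fin n))) (t : ℤ) (μ : k) : ℕ :=
  eigenDim k (cohAction k e F t) μ

section Ring

variable (k : Type*) [Field k]

/-- the Stanley--Reisner ideal of `Δ` in `A = k[x_1, …, x_n]`. -/
noncomputable def SRIdeal (Δ : SC n) : Ideal (MvPolynomial (Fin n) k) :=
  Ideal.span {f | ∃ σ : Finset (Fin n), σ ∉ Δ.faces ∧ f = ∏ i ∈ σ, MvPolynomial.X i}

/-- the dimension of the `(i, μ)`-component of `A ⧸ K`: the image of the homogeneous
degree-`i` polynomials `f` with `(rename e) f ≡ μ • f (mod K)`, i.e. the `μ`-eigenspace of the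
degree-`i` part of `A ⧸ K` for the action induced by the permutation `e` of the variables. -/
noncomputable def pieceDim (K : Ideal (MvPolynomial (Fin n) k)) (e : Equiv.Perm (Fin n))
    (i : ℕ) (μ : k) : ℕ :=
  Module.finrank k (Submodule.map (Ideal.Quotient.mkₐ k K).toLinearMap
    ((MvPolynomial.homogeneousSubmodule (Fin n) k i) ⊓
      Submodule.comap
        (((MvPolynomial.rename ⇑e :
            MvPolynomial (Fin n) k →ₐ[k] MvPolynomial (Fin n) k).toLinearMap
          - μ • LinearMap.id : MvPolynomial (Fin n) k →ₗ[k] MvPolynomial (Fin n) k))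
        (Submodule.restrictScalars k K)))

/-- the dimension of the full degree-`i` component of `A ⧸ K`. -/
noncomputable def pieceDimTot (K : Ideal (MvPolynomial (Fin n) k)) (i : ℕ) : ℕ :=
  Module.finrank k (Submodule.map (Ideal.Quotient.mkₐ k K).toLinearMap
    (MvPolynomial.homogeneousSubmodule (Fin n) k i))

set_option synthInstance.maxHeartbeats 1000000 in
/-- the preimage in `A` of the sigma module
`Σ(Θ; k[Δ]) = Θk[Δ] + ∑ᵢ ((θ_1, …, θ̂_i, …, θ_d)k[Δ] :_{k[Δ]} θ_i) ⊆ k[Δ]`. -/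
noncomputable def sigmaIdealA (Δ : SC n) {d : ℕ} (Θ : Fin d → MvPolynomial (Fin n) k) :
    Ideal (MvPolynomial (Fin n) k) :=
  Ideal.comap (Ideal.Quotient.mk (SRIdeal k Δ))
    (Ideal.span (Set.range fun i => Ideal.Quotient.mk (SRIdeal k Δ) (Θ i)) ⊔
      ⨆ i : Fin d,
        Submodule.colon
          (Ideal.span ((fun i' => Ideal.Quotient.mk (SRIdeal k Δ) (Θ i')) '' {i' | i' ≠ i}))
          (Ideal.span {Ideal.Quotient.mk (SRIdeal k Δ) (Θ i)}))

/-- `Θ` is a linear system of parameters for `k[Δ]`: it consists of linear forms and the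
Artinian reduction `k[Δ]/Θk[Δ] = A/(I_Δ + (Θ))` is finite-dimensional over `k`. -/
def IsLsop (Δ : SC n) {d : ℕ} (Θ : Fin d → MvPolynomial (Fin n) k) : Prop :=
  (∀ i, Θ i ∈ MvPolynomial.homogeneousSubmodule (Fin n) k 1) ∧
  FiniteDimensional k (MvPolynomial (Fin n) k ⧸ (SRIdeal k Δ ⊔ Ideal.span (Set.range Θ)))

end Ring


section Extras

/-- the basis of the direct sum, over all `U ∈ ℕⁿ` with `supp U ∈ Δ` and `|U| = j`, of the
relative simplicial cochains `C^{t-1}(Δ, cost_Δ s(U))`: pairs `(U, σ)` with `σ ∈ Δ`,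
`s(U) ⊆ σ`, `|U| = j`, `#σ = t`. -/
def RT (Δ : SC n) (j : ℕ) (t : ℤ) : Type :=
  {x : (Fin n → ℕ) × Finset (Fin n) //
    x.2 ∈ Δ.faces ∧ (Finset.univ.filter fun i => x.1 i ≠ 0) ⊆ x.2 ∧
      (∑ i, x.1 i) = j ∧ ((x.2.card : ℤ)) = t}

variable (k : Type*) [Field k]

/-- the simplicial coboundary map on `⊕_{U ∈ T(Δ)_j} C^{t-1}(Δ, cost_Δ s(U))`. -/
noncomputable def rtd (Δ : SC n) (j : ℕ) (t : ℤ) :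
    (RT Δ j t → k) →ₗ[k] (RT Δ j (t + 1) → k) where
  toFun f x := ∑ v ∈ x.1.2, (-1 : k) ^ (x.1.2.filter (· < v)).card *
      (if h : x.1.2.erase v ∈ Δ.faces ∧
          (Finset.univ.filter fun i => x.1.1 i ≠ 0) ⊆ x.1.2.erase v ∧
          (∑ i, x.1.1 i) = j ∧ (((x.1.2.erase v).card : ℤ)) = t
        then f ⟨(x.1.1, x.1.2.erase v), h⟩ else 0)
  map_add' f g := by
    funext x
    simp only [Pi.add_apply]
    rw [← Finset.sum_add_distrib]
    refine Finset.sum_congr rfl fun v _ => ?_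
    by_cases h : x.1.2.erase v ∈ Δ.faces ∧
        (Finset.univ.filter fun i => x.1.1 i ≠ 0) ⊆ x.1.2.erase v ∧
        (∑ i, x.1.1 i) = j ∧ (((x.1.2.erase v).card : ℤ)) = t
    · simp only [dif_pos h, Pi.add_apply, mul_add]; exact mul_add _ _ _
    · simp only [dif_neg h, mul_zero, add_zero]
  map_smul' c f := by
    funext x
    simp only [Pi.smul_apply, smul_eq_mul, RingHom.id_apply, Finset.mul_sum]
    refine Finset.sum_congr rfl fun v _ => ?_
    by_cases h : x.1.2.erase v ∈ Δ.faces ∧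
        (Finset.univ.filter fun i => x.1.1 i ≠ 0) ⊆ x.1.2.erase v ∧
        (∑ i, x.1.1 i) = j ∧ (((x.1.2.erase v).card : ℤ)) = t
    · simp only [dif_pos h, Pi.smul_apply, smul_eq_mul]; exact mul_left_comm _ _ _
    · simp only [dif_neg h, mul_zero, smul_zero]

/-- the action of a simplicial automorphism `g` of `Δ` on
`⊕_{U ∈ T(Δ)_j} C^{t-1}(Δ, cost_Δ s(U))`:  `(g · f)(U, σ) = ± f(g⁻¹ · U, g⁻¹ · σ)`. -/
noncomputable def rtact (Δ : SC n) (j : ℕ) (t : ℤ) (g : Equiv.Perm (Fin n)) :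
    (RT Δ j t → k) →ₗ[k] (RT Δ j t → k) where
  toFun f x := faceSign g⁻¹ x.1.2 •
      (if h : x.1.2.image ⇑g⁻¹ ∈ Δ.faces ∧
          (Finset.univ.filter fun i => (x.1.1 ∘ ⇑g) i ≠ 0) ⊆ x.1.2.image ⇑g⁻¹ ∧
          (∑ i, (x.1.1 ∘ ⇑g) i) = j ∧ (((x.1.2.image ⇑g⁻¹).card : ℤ)) = t
        then f ⟨(x.1.1 ∘ ⇑g, x.1.2.image ⇑g⁻¹), h⟩ else 0)
  map_add' f g' := by
    funext x
    simp only [Pi.add_apply]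
    by_cases h : x.1.2.image ⇑g⁻¹ ∈ Δ.faces ∧
        (Finset.univ.filter fun i => (x.1.1 ∘ ⇑g) i ≠ 0) ⊆ x.1.2.image ⇑g⁻¹ ∧
        (∑ i, (x.1.1 ∘ ⇑g) i) = j ∧ (((x.1.2.image ⇑g⁻¹).card : ℤ)) = t
    · simp only [dif_pos h, Pi.add_apply, smul_add]; exact smul_add _ _ _
    · simp only [dif_neg h, smul_zero, add_zero]
  map_smul' c f := by
    funext x
    simp only [Pi.smul_apply, RingHom.id_apply]
    by_cases h : x.1.2.image ⇑g⁻¹ ∈ Δ.faces ∧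
        (Finset.univ.filter fun i => (x.1.1 ∘ ⇑g) i ≠ 0) ⊆ x.1.2.image ⇑g⁻¹ ∧
        (∑ i, (x.1.1 ∘ ⇑g) i) = j ∧ (((x.1.2.image ⇑g⁻¹).card : ℤ)) = t
    · simp only [dif_pos h, Pi.smul_apply]
      rw [smul_comm]; rfl
    · simp only [dif_neg h, smul_zero]

/-- the basis of `Hom_A(K_t, k[Δ])_{-j}` where `K_•` is the Koszul complex on
`x_1^{j+1}, …, x_n^{j+1}`: pairs `(σ, V)` where `#σ = t` and `x^V` is a monomial of `k[Δ]` of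
degree `(j+1)t - j`. -/
def KT (Δ : SC n) (j : ℕ) (t : ℤ) : Type :=
  {x : Finset (Fin n) × (Fin n → ℕ) //
    ((x.1.card : ℤ) = t) ∧ (Finset.univ.filter fun i => x.2 i ≠ 0) ∈ Δ.faces ∧
      ((∑ i, x.2 i : ℕ) : ℤ) = (j + 1) * t - j}

/-- the differential of the complex `Hom_A(K_•, k[Δ])_{-j}`, whose `i`-th cohomology is the
graded piece `H_𝔪^i(k[Δ])_{-j}` of local cohomology. -/
noncomputable def ktd (Δ : SC n) (j : ℕ) (t : ℤ) :
    (KT Δ j t → k) →ₗ[k] (KT Δ j (t + 1) → k) where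
  toFun f x := ∑ v ∈ x.1.1, (-1 : k) ^ (x.1.1.filter (· < v)).card *
      (if h : j + 1 ≤ x.1.2 v ∧ (((x.1.1.erase v).card : ℤ) = t) ∧
          (Finset.univ.filter fun i => (fun i' => x.1.2 i' - if i' = v then j + 1 else 0) i ≠ 0)
            ∈ Δ.faces ∧
          ((∑ i, (fun i' => x.1.2 i' - if i' = v then j + 1 else 0) i : ℕ) : ℤ) = (j + 1) * t - j
        then f ⟨(x.1.1.erase v, fun i' => x.1.2 i' - if i' = v then j + 1 else 0), h.2⟩ else 0)
  map_add' f g := by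
    funext x
    simp only [Pi.add_apply]
    rw [← Finset.sum_add_distrib]
    refine Finset.sum_congr rfl fun v _ => ?_
    by_cases h : j + 1 ≤ x.1.2 v ∧ (((x.1.1.erase v).card : ℤ) = t) ∧
        (Finset.univ.filter fun i => (fun i' => x.1.2 i' - if i' = v then j + 1 else 0) i ≠ 0)
          ∈ Δ.faces ∧
        ((∑ i, (fun i' => x.1.2 i' - if i' = v then j + 1 else 0) i : ℕ) : ℤ) = (j + 1) * t - j
    · simp only [dif_pos h, Pi.add_apply, mul_add]; exact mul_add _ _ _
    · simp only [dif_neg h, mul_zero, add_zero]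
  map_smul' c f := by
    funext x
    simp only [Pi.smul_apply, smul_eq_mul, RingHom.id_apply, Finset.mul_sum]
    refine Finset.sum_congr rfl fun v _ => ?_
    by_cases h : j + 1 ≤ x.1.2 v ∧ (((x.1.1.erase v).card : ℤ) = t) ∧
        (Finset.univ.filter fun i => (fun i' => x.1.2 i' - if i' = v then j + 1 else 0) i ≠ 0)
          ∈ Δ.faces ∧
        ((∑ i, (fun i' => x.1.2 i' - if i' = v then j + 1 else 0) i : ℕ) : ℤ) = (j + 1) * t - j
    · simp only [dif_pos h, Pi.smul_apply, smul_eq_mul]; exact mul_left_comm _ _ _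
    · simp only [dif_neg h, mul_zero, smul_zero]

/-- the action of a simplicial automorphism `g` of `Δ` on `Hom_A(K_t, k[Δ])_{-j}`. -/
noncomputable def ktact (Δ : SC n) (j : ℕ) (t : ℤ) (g : Equiv.Perm (Fin n)) :
    (KT Δ j t → k) →ₗ[k] (KT Δ j t → k) where
  toFun f x := faceSign g⁻¹ x.1.1 •
      (if h : ((x.1.1.image ⇑g⁻¹).card : ℤ) = t ∧
          (Finset.univ.filter fun i => (x.1.2 ∘ ⇑g) i ≠ 0) ∈ Δ.faces ∧
          ((∑ i, (x.1.2 ∘ ⇑g) i : ℕ) : ℤ) = (j + 1) * t - j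
        then f ⟨(x.1.1.image ⇑g⁻¹, x.1.2 ∘ ⇑g), h⟩ else 0)
  map_add' f g' := by
    funext x
    simp only [Pi.add_apply]
    by_cases h : ((x.1.1.image ⇑g⁻¹).card : ℤ) = t ∧
        (Finset.univ.filter fun i => (x.1.2 ∘ ⇑g) i ≠ 0) ∈ Δ.faces ∧
        ((∑ i, (x.1.2 ∘ ⇑g) i : ℕ) : ℤ) = (j + 1) * t - j
    · simp only [dif_pos h, Pi.add_apply, smul_add]; exact smul_add _ _ _
    · simp only [dif_neg h, smul_zero, add_zero]
  map_smul' c f := by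
    funext x
    simp only [Pi.smul_apply, RingHom.id_apply]
    by_cases h : ((x.1.1.image ⇑g⁻¹).card : ℤ) = t ∧
        (Finset.univ.filter fun i => (x.1.2 ∘ ⇑g) i ≠ 0) ∈ Δ.faces ∧
        ((∑ i, (x.1.2 ∘ ⇑g) i : ℕ) : ℤ) = (j + 1) * t - j
    · simp only [dif_pos h, Pi.smul_apply]
      rw [smul_comm]; rfl
    · simp only [dif_neg h, smul_zero]

/-- the isotypic component `N^χ = {m : M | g • m = χ(g) • m for all g}` of a family of
linear endomorphisms indexed by `G`. -/
noncomputable def isotyp {M : Type*} [AddCommGroup M] [Module k M]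
    {G : Type*} (act : G → (M →ₗ[k] M)) (χ : G → k) : Submodule k M :=
  ⨅ g : G, LinearMap.ker (act g - χ g • LinearMap.id)

/-- the simplicial boundary map on (reduced) simplicial chains with integer coefficients. -/
noncomputable def bd (F : Finset (Finset (Fin n))) (t : ℤ) :
    (RF F ∅ (t + 1) → ℤ) →ₗ[ℤ] (RF F ∅ t → ℤ) where
  toFun c σ := ∑ v ∈ Finset.univ \ σ.1, (-1 : ℤ) ^ (σ.1.filter (· < v)).card *
      (if h : insert v σ.1 ∈ F ∧ (∅ : Finset (Fin n)) ⊆ insert v σ.1 ∧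
          (((insert v σ.1).card : ℤ)) = t + 1
        then c ⟨insert v σ.1, h⟩ else 0)
  map_add' c c' := by
    funext σ
    simp only [Pi.add_apply]
    rw [← Finset.sum_add_distrib]
    refine Finset.sum_congr rfl fun v _ => ?_
    by_cases h : insert v σ.1 ∈ F ∧ (∅ : Finset (Fin n)) ⊆ insert v σ.1 ∧
        (((insert v σ.1).card : ℤ)) = t + 1
    · simp only [dif_pos h, Pi.add_apply, mul_add]; exact mul_add _ _ _
    · simp only [dif_neg h, mul_zero, add_zero]
  map_smul' a c := by
    funext σ
    simp only [Pi.smul_apply, smul_eq_mul, RingHom.id_apply, Finset.mul_sum]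
    refine Finset.sum_congr rfl fun v _ => ?_
    by_cases h : insert v σ.1 ∈ F ∧ (∅ : Finset (Fin n)) ⊆ insert v σ.1 ∧
        (((insert v σ.1).card : ℤ)) = t + 1
    · simp only [dif_pos h, Pi.smul_apply, smul_eq_mul]; exact mul_left_comm _ _ _
    · simp only [dif_neg h, mul_zero, smul_zero]

/-- reduced simplicial homology `H̃_t(F; ℤ)` with integer coefficients. -/
noncomputable abbrev homologyZ (F : Finset (Finset (Fin n))) (t : ℤ) : Type _ :=
  cohOf ℤ (bd F (t + 1)) (bd F t)

/-- the geometric realization `|Δ| ⊆ ℝⁿ` of `Δ`. -/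
noncomputable def geomReal (Δ : SC n) : Set (Fin n → ℝ) :=
  {x | (∀ i, 0 ≤ x i) ∧ ∑ i, x i = 1 ∧ (Finset.univ.filter fun i => x i ≠ 0) ∈ Δ.faces}

end Extras

namespace GroupActionsSRAux

open Module

variable {k : Type} [Field k]

/-- precomposition with `σ⁻¹`: the permutation operator on functions. -/
noncomputable def permOp (k : Type) [Field k] {S : Type} (σ : Equiv.Perm S) :
    (S → k) →ₗ[k] (S → k) := LinearMap.funLeft k k ⇑σ⁻¹

lemma permOp_apply {S : Type} (σ : Equiv.Perm S) (c : S → k) (s : S) :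
    permOp k σ c s = c (σ⁻¹ s) := rfl

/-- diagonal operator. -/
noncomputable def diagOp (k : Type) [Field k] {S : Type} (w : S → k) :
    (S → k) →ₗ[k] (S → k) where
  toFun c := fun s => w s * c s
  map_add' c c' := by funext s; simp [mul_add]
  map_smul' a c := by funext s; simp [smul_eq_mul]; ring

lemma diagOp_apply {S : Type} (w : S → k) (c : S → k) (s : S) :
    diagOp k w c s = w s * c s := rfl

lemma diagOp_injective {S : Type} {w : S → k} (hw : ∀ s, w s ≠ 0) :
    Function.Injective (diagOp k w) := by
  intro c c' h
  funext s
  have := congrFun h s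
  simp only [diagOp_apply] at this
  exact mul_left_cancel₀ (hw s) this

lemma mem_eigen_iff {S : Type} (σ : Equiv.Perm S) (μ : k) (c : S → k) :
    c ∈ LinearMap.ker (permOp k σ - μ • LinearMap.id) ↔ ∀ s, c (σ⁻¹ s) = μ * c s := by
  rw [LinearMap.mem_ker]
  constructor
  · intro h s
    have := congrFun h s
    simpa [permOp_apply, sub_eq_zero] using this
  · intro h
    funext s
    simpa [permOp_apply, sub_eq_zero] using h s

lemma permOp_pow {S : Type} (σ : Equiv.Perm S) (l : ℕ) :
    (permOp k σ) ^ l = permOp k (σ ^ l) := by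
  induction l with
  | zero => rfl
  | succ m ih =>
    rw [pow_succ, ih]
    refine LinearMap.ext fun c => funext fun s => ?_
    simp only [Module.End.mul_apply, permOp_apply]
    congr 1
    rw [← inv_pow, ← inv_pow, pow_succ, Equiv.Perm.mul_apply,
      ← Equiv.Perm.mul_apply, ← Equiv.Perm.mul_apply, ← pow_succ, ← pow_succ']

end GroupActionsSRAux

namespace GroupActionsSRAux

open Module Finset

variable {k : Type} [Field k] {S : Type} [Fintype S] {p : ℕ} {ζ : k}

theorem core (hp : p.Prime) (hpk : (p : k) ≠ 0) (hζ : IsPrimitiveRoot ζ p)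
    (σ : Equiv.Perm S) (hσ : σ ^ p = 1)
    (hfr : ∀ s : S, ∀ l : ℕ, 0 < l → l < p → (σ ^ l) s ≠ s) (j : ℕ) :
    p * Module.finrank k (LinearMap.ker
        (permOp k σ - ζ ^ j • (LinearMap.id : (S → k) →ₗ[k] (S → k)))) = Fintype.card S := by
  haveI : Fact (1 < p) := ⟨hp.one_lt⟩
  have hppos : 0 < p := hp.pos
  set T : (S → k) →ₗ[k] (S → k) := permOp k σ with hT
  set E : ℕ → Submodule k (S → k) :=
    fun i => LinearMap.ker (T - ζ ^ i • (LinearMap.id : (S → k) →ₗ[k] (S → k))) with hE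
  have hζp : ζ ^ p = 1 := hζ.pow_eq_one
  have hζne : ζ ≠ 0 := by
    intro h0
    rw [h0, zero_pow hppos.ne'] at hζp
    exact zero_ne_one hζp
  have hζmod : ∀ m : ℕ, ζ ^ (m % p) = ζ ^ m := by
    intro m
    conv_rhs => rw [← Nat.div_add_mod m p]
    rw [pow_add, pow_mul, hζp, one_pow, one_mul]
  have hσmod : ∀ m : ℕ, σ ^ (m % p) = σ ^ m := by
    intro m
    conv_rhs => rw [← Nat.div_add_mod m p]
    rw [pow_add, pow_mul, hσ, one_pow, one_mul]
  -- the setoid of σ-orbits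
  have hrefl : ∀ s : S, ∃ l : ℕ, (σ ^ l) s = s := fun s => ⟨0, rfl⟩
  have hsymm : ∀ {s t : S}, (∃ l : ℕ, (σ ^ l) s = t) → ∃ l : ℕ, (σ ^ l) t = s := by
    rintro s t ⟨l, rfl⟩
    refine ⟨p - l % p, ?_⟩
    rw [← hσmod l, ← Equiv.Perm.mul_apply, ← pow_add]
    have hlt := Nat.mod_lt l hppos
    have : p - l % p + l % p = p := by omega
    rw [this, hσ, Equiv.Perm.one_apply]
  have htrans : ∀ {s t u : S}, (∃ l : ℕ, (σ ^ l) s = t) → (∃ l : ℕ, (σ ^ l) t = u) →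
      ∃ l : ℕ, (σ ^ l) s = u := by
    rintro s t u ⟨l₁, rfl⟩ ⟨l₂, rfl⟩
    exact ⟨l₂ + l₁, by rw [pow_add, Equiv.Perm.mul_apply]⟩
  letI st : Setoid S := ⟨fun s t => ∃ l : ℕ, (σ ^ l) s = t, ⟨hrefl, hsymm, htrans⟩⟩
  set rep : S → S := fun s => (Quotient.mk st s).out with hrepdef
  have hrep_orbit : ∀ s : S, ∃ l : ℕ, (σ ^ l) (rep s) = s := fun s => Quotient.mk_out s
  have hrep_step : ∀ s : S, rep (σ s) = rep s := by
    intro s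
    have : Quotient.mk st (σ s) = Quotient.mk st s := Quotient.sound (hsymm ⟨1, by rw [pow_one]⟩)
    simp only [hrepdef, this]
  have huniq : ∀ (x : S) (a b : ℕ), a < p → b < p → (σ ^ a) x = (σ ^ b) x → a = b := by
    have key : ∀ (x : S) (a b : ℕ), a ≤ b → a < p → b < p → (σ ^ a) x = (σ ^ b) x → a = b := by
      intro x a b hab ha hb hx
      by_contra hne
      have hba : 0 < b - a := by omega
      have : (σ ^ (b - a)) ((σ ^ a) x) = (σ ^ a) x := by
        rw [← Equiv.Perm.mul_apply, ← pow_add]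
        rw [Nat.sub_add_cancel hab, hx]
      exact hfr _ (b - a) hba (by omega) this
    intro x a b ha hb hx
    rcases le_total a b with h | h
    · exact key x a b h ha hb hx
    · exact (key x b a h hb ha hx.symm).symm
  have exrep : ∀ s : S, ∃ l : ℕ, l < p ∧ (σ ^ l) (rep s) = s := by
    intro s
    obtain ⟨l, hl⟩ := hrep_orbit s
    exact ⟨l % p, Nat.mod_lt l hppos, by rw [hσmod]; exact hl⟩
  set h : S → ZMod p := fun s => ((exrep s).choose : ZMod p) with hdef
  have hkey : ∀ s : S, h (σ s) = h s + 1 := by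
    intro s
    simp only [hdef]
    obtain ⟨ha, hae⟩ := (exrep (σ s)).choose_spec
    obtain ⟨hb, hbe⟩ := (exrep s).choose_spec
    set a := (exrep (σ s)).choose with hadef
    set b := (exrep s).choose with hbdef
    rw [hrep_step s] at hae
    have h2 : (σ ^ (b + 1)) (rep s) = σ s := by
      rw [pow_succ', Equiv.Perm.mul_apply, hbe]
    rcases Nat.lt_or_ge (b + 1) p with hlt | hge
    · have : a = b + 1 := huniq (rep s) a (b + 1) ha hlt (by rw [hae, h2])
      rw [this, Nat.cast_add, Nat.cast_one]
    · have heq : b + 1 = p := by omega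
      have h3 : (σ ^ (b + 1)) (rep s) = rep s := by rw [heq, hσ, Equiv.Perm.one_apply]
      have h4 : σ s = rep s := by rw [← h2, h3]
      have h5 : a = 0 := huniq (rep s) a 0 ha hppos (by rw [hae, pow_zero, h4]; rfl)
      have h6 : ((b : ZMod p) + 1 : ZMod p) = 0 := by
        have h7 : (((b + 1 : ℕ)) : ZMod p) = ((p : ℕ) : ZMod p) := by rw [heq]
        simpa using h7
      rw [h5, Nat.cast_zero, h6]
  have zh_step : ∀ a : ZMod p, ζ ^ (a + 1).val = ζ * ζ ^ a.val := by
    intro a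
    rw [ZMod.val_add, ZMod.val_one, hζmod, pow_succ']
  have keyinv : ∀ s : S, h s = h (σ⁻¹ s) + 1 := by
    intro s
    have := hkey (σ⁻¹ s)
    rwa [← Equiv.Perm.mul_apply, mul_inv_cancel, Equiv.Perm.one_apply] at this
  -- adjacent eigenspace dimensions agree
  have hD : ∀ (i : ℕ), ∀ c ∈ E (i + 1), diagOp k (fun s => ζ ^ (h s).val) c ∈ E i := by
    intro i c hc
    rw [hE, mem_eigen_iff] at hc ⊢
    intro s
    rw [diagOp_apply, diagOp_apply, hc s]
    have h1 : ζ ^ (h s).val = ζ * ζ ^ (h (σ⁻¹ s)).val := by rw [keyinv s, zh_step]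
    rw [h1]; ring
  have hD' : ∀ (i : ℕ), ∀ c ∈ E i, diagOp k (fun s => ζ ^ (-(h s)).val) c ∈ E (i + 1) := by
    intro i c hc
    rw [hE, mem_eigen_iff] at hc ⊢
    intro s
    rw [diagOp_apply, diagOp_apply, hc s]
    have h2 : ζ * ζ ^ (-(h s)).val = ζ ^ (-(h (σ⁻¹ s))).val := by
      have h3 : -(h (σ⁻¹ s)) = -(h s) + 1 := by rw [keyinv s]; ring
      rw [h3, zh_step]
    have h4 : ζ ≠ 0 := hζne
    field_simp
    rw [← h2]; ring
  have hadj : ∀ i : ℕ, finrank k (E (i + 1)) = finrank k (E i) := by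
    intro i
    have hinj1 : Function.Injective (diagOp k (fun s => ζ ^ (h s).val)) :=
      diagOp_injective (fun s => pow_ne_zero _ hζne)
    have hinj2 : Function.Injective (diagOp k (fun s => ζ ^ (-(h s)).val)) :=
      diagOp_injective (fun s => pow_ne_zero _ hζne)
    apply le_antisymm
    · calc finrank k (E (i + 1))
          = finrank k (Submodule.map (diagOp k (fun s => ζ ^ (h s).val)) (E (i + 1))) :=
            (Submodule.equivMapOfInjective _ hinj1 _).finrank_eq
        _ ≤ finrank k (E i) := Submodule.finrank_mono
            (by rintro x ⟨c, hc, rfl⟩; exact hD i c hc)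
    · calc finrank k (E i)
          = finrank k (Submodule.map (diagOp k (fun s => ζ ^ (-(h s)).val)) (E i)) :=
            (Submodule.equivMapOfInjective _ hinj2 _).finrank_eq
        _ ≤ finrank k (E (i + 1)) := Submodule.finrank_mono
            (by rintro x ⟨c, hc, rfl⟩; exact hD' i c hc)
  have hEq0 : ∀ i : ℕ, finrank k (E i) = finrank k (E 0) := by
    intro i
    induction i with
    | zero => rfl
    | succ m ih => rw [hadj m, ih]
  -- Step C : the eigenspace dimensions sum to the total dimension
  set ξ : k := ζ ^ (p - 1) with hξ
  have hζξ : ζ * ξ = 1 := by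
    rw [hξ, ← pow_succ']
    have hps : p - 1 + 1 = p := by omega
    rw [hps, hζp]
  have hξp : ξ ^ p = 1 := by rw [hξ, ← pow_mul, mul_comm, pow_mul, hζp, one_pow]
  have hTp : T ^ p = 1 := by
    rw [hT, permOp_pow, hσ]
    exact LinearMap.ext fun c => rfl
  set P : ℕ → ((S → k) →ₗ[k] (S → k)) :=
    fun i => ∑ l ∈ range p, (ξ ^ i) ^ l • T ^ l with hPdef
  have sum_shift : ∀ (g : ℕ → ((S → k) →ₗ[k] (S → k))) (n : ℕ), g n = g 0 →
      ∑ l ∈ range n, g (l + 1) = ∑ l ∈ range n, g l := by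
    intro g n hg
    cases n with
    | zero => simp
    | succ m =>
      have h3 : (∑ l ∈ range (m + 1), g (l + 1)) + g 0 = (∑ l ∈ range (m + 1), g l) + g 0 := by
        rw [← Finset.sum_range_succ' g (m + 1), Finset.sum_range_succ g (m + 1), hg]
      exact add_right_cancel h3
  have hζξi : ∀ i : ℕ, ζ ^ i * ξ ^ i = 1 := by
    intro i; rw [← mul_pow, hζξ, one_pow]
  have hTP : ∀ i : ℕ, T * P i = ζ ^ i • P i := by
    intro i
    set g : ℕ → ((S → k) →ₗ[k] (S → k)) := fun m => (ζ ^ i * (ξ ^ i) ^ m) • T ^ m with hg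
    have e3 : T * P i = ∑ l ∈ range p, g (l + 1) := by
      simp only [hPdef, hg, Finset.mul_sum]
      refine Finset.sum_congr rfl fun l _ => ?_
      rw [mul_smul_comm, ← pow_succ']
      congr 1
      rw [pow_succ (ξ ^ i) l]
      calc (ξ ^ i) ^ l = (ζ ^ i * ξ ^ i) * (ξ ^ i) ^ l := by rw [hζξi, one_mul]
        _ = ζ ^ i * ((ξ ^ i) ^ l * ξ ^ i) := by ring
    have hξip : (ξ ^ i) ^ p = 1 := by rw [← pow_mul, mul_comm i p, pow_mul, hξp, one_pow]
    have hgp : g p = g 0 := by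
      simp only [hg]
      rw [hTp, hξip, pow_zero, pow_zero]
    rw [e3, sum_shift g p hgp]
    simp only [hPdef, hg, Finset.smul_sum]
    refine Finset.sum_congr rfl fun l _ => ?_
    rw [smul_smul]
  have hPE : ∀ (i : ℕ) (v : S → k), P i v ∈ E i := by
    intro i v
    have : P i v ∈ LinearMap.ker (T - ζ ^ i • (LinearMap.id : (S → k) →ₗ[k] (S → k))) := by
      rw [LinearMap.mem_ker, LinearMap.sub_apply, LinearMap.smul_apply, LinearMap.id_apply,
        sub_eq_zero, ← Module.End.mul_apply, hTP i, LinearMap.smul_apply]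
    exact this
  have hTv : ∀ (i : ℕ) (v : S → k), v ∈ E i → T v = ζ ^ i • v := by
    intro i v hv
    have hv' : (T - ζ ^ i • (LinearMap.id : (S → k) →ₗ[k] (S → k))) v = 0 :=
      LinearMap.mem_ker.mp hv
    rw [LinearMap.sub_apply, LinearMap.smul_apply, LinearMap.id_apply, sub_eq_zero] at hv'
    exact hv'
  have hTlv : ∀ (i l : ℕ) (v : S → k), v ∈ E i → (T ^ l) v = ((ζ ^ i) ^ l) • v := by
    intro i l v hv
    induction l with
    | zero => simp
    | succ m ih =>
      rw [pow_succ' T m, Module.End.mul_apply, ih, map_smul, hTv i v hv, smul_smul, ← pow_succ]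
  have hgeom : ∀ x : k, x ≠ 1 → x ^ p = 1 → ∑ l ∈ range p, x ^ l = 0 := by
    intro x hx hxp
    rw [geom_sum_eq hx, hxp, sub_self, zero_div]
  have hne1 : ∀ i j' : ℕ, i < p → j' < p → i ≠ j' → ξ ^ i * ζ ^ j' ≠ 1 := by
    intro i j' hi hj hij h1
    rw [hξ, ← pow_mul, ← pow_add] at h1
    have hdvd : p ∣ (p - 1) * i + j' := (hζ.pow_eq_one_iff_dvd _).mp h1
    have hcast : ((((p - 1) * i + j' : ℕ)) : ZMod p) = 0 := by
      rw [ZMod.natCast_eq_zero_iff]; exact hdvd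
    have hpm1 : (((p - 1 : ℕ)) : ZMod p) = -1 := by
      have h2 : (((p - 1 : ℕ) + 1 : ℕ) : ZMod p) = 0 := by
        have h4 : p - 1 + 1 = p := by omega
        rw [h4, ZMod.natCast_self]
      push_cast at h2
      exact eq_neg_of_add_eq_zero_left h2
    push_cast at hcast
    rw [hpm1] at hcast
    have hij2 : ((i : ZMod p)) = (j' : ZMod p) := by linear_combination -hcast
    apply hij
    have h5 := congrArg ZMod.val hij2
    rwa [ZMod.val_cast_of_lt hi, ZMod.val_cast_of_lt hj] at h5
  have hxp1 : ∀ i j' : ℕ, (ξ ^ i * ζ ^ j') ^ p = 1 := by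
    intro i j'
    have h1 : (ξ ^ i) ^ p = 1 := by rw [← pow_mul, mul_comm, pow_mul, hξp, one_pow]
    have h2 : (ζ ^ j') ^ p = 1 := by rw [← pow_mul, mul_comm, pow_mul, hζp, one_pow]
    rw [mul_pow, h1, h2, one_mul]
  have hPeig : ∀ i j' : ℕ, i < p → j' < p → ∀ v ∈ E j',
      P i v = (if i = j' then (p : k) else 0) • v := by
    intro i j' hi hj v hv
    have e1 : P i v = (∑ l ∈ range p, (ξ ^ i * ζ ^ j') ^ l) • v := by
      rw [hPdef]
      rw [LinearMap.sum_apply]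
      rw [Finset.sum_smul]
      refine Finset.sum_congr rfl fun l _ => ?_
      rw [LinearMap.smul_apply, hTlv j' l v hv, smul_smul, ← mul_pow]
    rw [e1]
    by_cases hij : i = j'
    · subst hij
      have h1 : ξ ^ i * ζ ^ i = 1 := by rw [mul_comm, hζξi]
      simp only [h1, one_pow, Finset.sum_const, Finset.card_range, nsmul_eq_mul, mul_one,
        if_pos]
    · rw [hgeom _ (hne1 i j' hi hj hij) (hxp1 i j'), if_neg hij]
  have hPsum : (∑ i ∈ range p, P i) = (p : k) • (1 : (S → k) →ₗ[k] (S → k)) := by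
    have e1 : ∀ i l : ℕ, (ξ ^ i) ^ l = (ξ ^ l) ^ i := by
      intro i l; rw [← pow_mul ξ i l, ← pow_mul ξ l i, mul_comm]
    have hξl : ∀ l : ℕ, 0 < l → l < p → ξ ^ l ≠ 1 := by
      intro l hl0 hlp h1
      rw [hξ, ← pow_mul] at h1
      have hdvd : p ∣ (p - 1) * l := (hζ.pow_eq_one_iff_dvd _).mp h1
      rcases (Nat.Prime.dvd_mul hp).mp hdvd with h2 | h2
      · have := Nat.le_of_dvd (by omega) h2; omega
      · have := Nat.le_of_dvd hl0 h2; omega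
    have hξlp : ∀ l : ℕ, (ξ ^ l) ^ p = 1 := by
      intro l; rw [← pow_mul, mul_comm, pow_mul, hξp, one_pow]
    calc ∑ i ∈ range p, P i
        = ∑ i ∈ range p, ∑ l ∈ range p, (ξ ^ l) ^ i • T ^ l := by
          refine Finset.sum_congr rfl fun i _ => ?_
          rw [hPdef]
          exact Finset.sum_congr rfl fun l _ => by rw [e1]
      _ = ∑ l ∈ range p, (∑ i ∈ range p, (ξ ^ l) ^ i) • T ^ l := by
          rw [Finset.sum_comm]
          exact Finset.sum_congr rfl fun l _ => (Finset.sum_smul).symm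
      _ = (p : k) • (1 : (S → k) →ₗ[k] (S → k)) := by
          rw [Finset.sum_eq_single 0]
          · simp only [pow_zero, one_pow, Finset.sum_const, Finset.card_range, nsmul_eq_mul,
              mul_one]
          · intro l hl hl0
            rw [hgeom (ξ ^ l) (hξl l (Nat.pos_of_ne_zero hl0) (Finset.mem_range.mp hl))
              (hξlp l), zero_smul]
          · intro habs; exact absurd (Finset.mem_range.mpr hppos) habs
  -- the two injections
  set Φ : (S → k) →ₗ[k] ((i : Fin p) → E i.1) :=
    LinearMap.pi (fun i => LinearMap.codRestrict (E i.1) (P i.1) (fun v => hPE i.1 v)) with hΦ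
  have hΦinj : Function.Injective Φ := by
    suffices h0 : ∀ v, Φ v = 0 → v = 0 by
      intro v w hvw
      have := h0 (v - w) (by rw [map_sub, hvw, sub_self])
      rwa [sub_eq_zero] at this
    intro v hv
    have hPv : ∀ i : Fin p, P i.1 v = 0 := by
      intro i
      have h1 := congrFun hv i
      have h2 : ((Φ v i : E i.1) : S → k) = P i.1 v := rfl
      rw [h1] at h2
      exact h2.symm
    have hsum : (∑ i ∈ range p, P i) v = 0 := by
      rw [LinearMap.sum_apply]
      refine Finset.sum_eq_zero fun l hl => hPv ⟨l, Finset.mem_range.mp hl⟩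
    rw [hPsum, LinearMap.smul_apply, Module.End.one_apply] at hsum
    exact (smul_eq_zero.mp hsum).resolve_left hpk
  set Ψ : ((i : Fin p) → E i.1) →ₗ[k] (S → k) :=
    ∑ i : Fin p, (E i.1).subtype.comp (LinearMap.proj i) with hΨ
  have hΨapp : ∀ v, Ψ v = ∑ i : Fin p, ((v i : S → k)) := by
    intro v
    rw [hΨ, LinearMap.sum_apply]
    rfl
  have hΨinj : Function.Injective Ψ := by
    suffices h0 : ∀ v, Ψ v = 0 → v = 0 by
      intro v w hvw
      have := h0 (v - w) (by rw [map_sub, hvw, sub_self])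
      rwa [sub_eq_zero] at this
    intro v hv
    funext i
    have h1 : P i.1 (Ψ v) = 0 := by rw [hv, map_zero]
    rw [hΨapp, map_sum] at h1
    have h2 : ∀ i' : Fin p,
        P i.1 ((v i' : S → k)) = (if i.1 = i'.1 then (p : k) else 0) • ((v i' : S → k)) :=
      fun i' => hPeig i.1 i'.1 i.2 i'.2 _ (v i').2
    rw [Finset.sum_congr rfl (fun i' _ => h2 i')] at h1
    rw [Finset.sum_eq_single i] at h1
    · rw [if_pos rfl] at h1
      have h3 := (smul_eq_zero.mp h1).resolve_left hpk
      exact Subtype.ext h3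
    · intro b _ hb
      rw [if_neg (fun hcontra => hb (Fin.ext hcontra.symm)), zero_smul]
    · intro habs; exact absurd (Finset.mem_univ i) habs
  have hpi : finrank k ((i : Fin p) → ↥(E i.1)) = ∑ i : Fin p, finrank k ↥(E i.1) :=
    Module.finrank_pi_fintype k
  have up : finrank k (S → k) ≤ ∑ i : Fin p, finrank k (E i.1) :=
    le_of_le_of_eq (LinearMap.finrank_le_finrank_of_injective hΦinj) hpi
  have down : ∑ i : Fin p, finrank k (E i.1) ≤ finrank k (S → k) :=
    le_trans (le_of_eq hpi.symm) (LinearMap.finrank_le_finrank_of_injective hΨinj)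
  have hsum_eq : ∑ i : Fin p, finrank k (E i.1) = finrank k (S → k) := le_antisymm down up
  have hconst : ∑ i : Fin p, finrank k (E i.1) = p * finrank k (E 0) := by
    rw [Finset.sum_congr rfl (fun i _ => hEq0 i.1), Finset.sum_const, Finset.card_univ,
      Fintype.card_fin, smul_eq_mul]
  have hfin : p * finrank k (E 0) = Fintype.card S := by
    rw [← hconst, hsum_eq, Module.finrank_pi]
  rw [hEq0 j]
  exact hfin


end GroupActionsSRAux

namespace GroupActionsSRAux

open MvPolynomial

variable {n : ℕ} {k : Type} [Field k]

/-- the indicator finsupp of a finset. -/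
noncomputable def ind (σ : Finset (Fin n)) : Fin n →₀ ℕ := ∑ i ∈ σ, Finsupp.single i 1

lemma ind_apply (σ : Finset (Fin n)) (j : Fin n) : ind σ j = if j ∈ σ then 1 else 0 := by
  rw [ind, Finset.sum_apply']
  rw [Finset.sum_congr rfl (fun i _ => Finsupp.single_apply)]
  exact Finset.sum_ite_eq' σ j (fun _ => 1)

lemma ind_support (σ : Finset (Fin n)) : (ind σ).support = σ := by
  ext j
  rw [Finsupp.mem_support_iff, ind_apply]
  by_cases h : j ∈ σ <;> simp [h]

lemma prodX_eq_monomial (σ : Finset (Fin n)) :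
    (∏ i ∈ σ, (X i : MvPolynomial (Fin n) k)) = monomial (ind σ) 1 := by
  classical
  induction σ using Finset.induction_on with
  | empty => simp [ind]
  | insert a s h ih =>
    have h2 : ind (insert _ _) = Finsupp.single _ 1 + ind _ := Finset.sum_insert h
    rw [Finset.prod_insert h, ih, X, monomial_mul, one_mul, h2]

lemma monomial_mem_SRIdeal (Δ : SC n) (U : Fin n →₀ ℕ) (hU : U.support ∉ Δ.faces) (c : k) :
    monomial U c ∈ SRIdeal k Δ := by
  have hle : ind U.support ≤ U := by
    intro j
    rw [ind_apply]
    by_cases h : j ∈ U.support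
    · rw [if_pos h]
      exact Nat.one_le_iff_ne_zero.mpr (Finsupp.mem_support_iff.mp h)
    · rw [if_neg h]
      exact Nat.zero_le _
  have hfac : monomial U c =
      (∏ i ∈ U.support, (X i : MvPolynomial (Fin n) k)) * monomial (U - ind U.support) c := by
    rw [prodX_eq_monomial, monomial_mul, one_mul, add_tsub_cancel_of_le hle]
  rw [hfac]
  refine Ideal.mul_mem_right _ _ (Ideal.subset_span ?_)
  exact ⟨U.support, hU, rfl⟩

lemma mem_SRIdeal_iff (Δ : SC n) (f : MvPolynomial (Fin n) k) :
    f ∈ SRIdeal k Δ ↔ ∀ U ∈ f.support, U.support ∉ Δ.faces := by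
  classical
  constructor
  · intro hf
    refine Submodule.span_induction ?_ ?_ ?_ ?_ hf
    · rintro x ⟨σ, hσ, rfl⟩ U hU
      rw [prodX_eq_monomial, support_monomial] at hU
      rw [if_neg (one_ne_zero : (1 : k) ≠ 0)] at hU
      rw [Finset.mem_singleton.mp hU, ind_support]
      exact hσ
    · intro U hU
      simp at hU
    · intro x y _ _ hx hy U hU
      rcases Finset.mem_union.mp (support_add hU) with h | h
      · exact hx U h
      · exact hy U h
    · intro a x _ hx W hW
      rw [smul_eq_mul] at hW
      have h1 := support_mul a x hW
      rw [Finset.mem_add] at h1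
      obtain ⟨V, _, U, hU, rfl⟩ := h1
      intro hmem
      refine hx U hU (Δ.down_closed _ hmem _ ?_)
      intro j hj
      rw [Finsupp.mem_support_iff] at hj ⊢
      rw [Finsupp.add_apply]
      omega
  · intro hf
    rw [← support_sum_monomial_coeff f]
    exact Ideal.sum_mem _ (fun U hU => monomial_mem_SRIdeal Δ U (hf U hU) _)

lemma image_mem_faces_iff (Δ : SC n) (e : Equiv.Perm (Fin n))
    (he : ∀ σ ∈ Δ.faces, σ.image ⇑e ∈ Δ.faces) (σ : Finset (Fin n)) :
    σ.image ⇑e ∈ Δ.faces ↔ σ ∈ Δ.faces := by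
  classical
  constructor
  · intro h
    have hinj : Function.Injective (Finset.image ⇑e : Finset (Fin n) → Finset (Fin n)) :=
      Finset.image_injective e.injective
    have hsub : Δ.faces.image (Finset.image ⇑e) ⊆ Δ.faces := by
      intro τ hτ
      obtain ⟨τ', h1, rfl⟩ := Finset.mem_image.mp hτ
      exact he τ' h1
    have heq : Δ.faces.image (Finset.image ⇑e) = Δ.faces :=
      Finset.eq_of_subset_of_card_le hsub
        (le_of_eq (Finset.card_image_of_injective _ hinj).symm)
    rw [← heq] at h
    obtain ⟨τ', h1, h2⟩ := Finset.mem_image.mp h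
    rwa [← hinj h2]
  · exact he σ

lemma SRIdeal_rename (Δ : SC n) (e : Equiv.Perm (Fin n))
    (he : ∀ σ ∈ Δ.faces, σ.image ⇑e ∈ Δ.faces) (f : MvPolynomial (Fin n) k)
    (hf : f ∈ SRIdeal k Δ) : rename ⇑e f ∈ SRIdeal k Δ := by
  classical
  rw [mem_SRIdeal_iff] at hf ⊢
  intro U hU
  rw [support_rename_of_injective e.injective] at hU
  obtain ⟨V, hV, rfl⟩ := Finset.mem_image.mp hU
  rw [Finsupp.mapDomain_support_of_injective e.injective V]
  intro hmem
  exact hf V hV ((image_mem_faces_iff Δ e he V.support).mp hmem)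

end GroupActionsSRAux

namespace GroupActionsSRAux

open MvPolynomial

variable {n : ℕ} {k : Type} [Field k]

/-- the set of degree-`i` monomials supported on faces of `Δ`. -/
def Mi (Δ : SC n) (i : ℕ) : Type :=
  {U : Fin n →₀ ℕ // U.support ∈ Δ.faces ∧ U.degree = i}

noncomputable instance (Δ : SC n) (i : ℕ) : Fintype (Mi Δ i) := by
  have hinj : Function.Injective
      (fun U : Mi Δ i => (fun j => (⟨U.1 j, by
        have h1 := Finsupp.le_degree j U.1
        have h2 := U.2.2
        omega⟩ : Fin (i + 1))) : Mi Δ i → (Fin n → Fin (i + 1))) := by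
    intro U V h
    apply Subtype.ext
    apply Finsupp.ext
    intro j
    have := congrFun h j
    simpa using congrArg Fin.val this
  exact Fintype.ofInjective _ hinj

/-- sum of the good monomials with given coefficients. -/
noncomputable def phiMap (k : Type) [Field k] (Δ : SC n) (i : ℕ) :
    (Mi Δ i → k) →ₗ[k] MvPolynomial (Fin n) k where
  toFun c := ∑ U : Mi Δ i, c U • monomial U.1 (1 : k)
  map_add' c c' := by
    simp only [Pi.add_apply, add_smul]
    rw [Finset.sum_add_distrib]
  map_smul' a c := by
    simp only [Pi.smul_apply, RingHom.id_apply, Finset.smul_sum, smul_smul, smul_eq_mul]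

/-- constructor for `Mi`. -/
def mkMi (Δ : SC n) (i : ℕ) (U : Fin n →₀ ℕ)
    (h : U.support ∈ Δ.faces ∧ U.degree = i) : Mi Δ i := ⟨U, h⟩

lemma coeff_phiMap (Δ : SC n) (i : ℕ) (c : Mi Δ i → k) (V : Fin n →₀ ℕ) :
    coeff V (phiMap k Δ i c) =
      if h : V.support ∈ Δ.faces ∧ V.degree = i then c (mkMi Δ i V h) else 0 := by
  classical
  have h0 : coeff V (phiMap k Δ i c) = ∑ U : Mi Δ i, c U * (if U.1 = V then 1 else 0) := by
    rw [phiMap]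
    simp only [LinearMap.coe_mk, AddHom.coe_mk]
    rw [coeff_sum]
    exact Finset.sum_congr rfl fun U _ => by rw [coeff_smul, coeff_monomial, smul_eq_mul]
  rw [h0]
  by_cases h : V.support ∈ Δ.faces ∧ V.degree = i
  · rw [dif_pos h]
    rw [Finset.sum_eq_single (mkMi Δ i V h)
      (fun U _ hU => by
        rw [if_neg (fun (habs : U.1 = V) => hU (Subtype.ext habs)), mul_zero])
      (fun habs => absurd (Finset.mem_univ _) habs)]
    rw [if_pos (show (mkMi Δ i V h).1 = V from rfl), mul_one]
  · rw [dif_neg h]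
    refine Finset.sum_eq_zero fun U _ => ?_
    rw [if_neg (fun (habs : U.1 = V) => h (habs ▸ U.2)), mul_zero]

lemma phiMap_mem_SRIdeal (Δ : SC n) (i : ℕ) (c : Mi Δ i → k)
    (h : phiMap k Δ i c ∈ SRIdeal k Δ) : c = 0 := by
  funext U
  have h1 : coeff U.1 (phiMap k Δ i c) = c U := by
    rw [coeff_phiMap, dif_pos U.2]
    rfl
  by_contra hc
  have h2 : U.1 ∈ (phiMap k Δ i c).support := by
    rw [mem_support_iff, h1]
    exact hc
  exact ((mem_SRIdeal_iff Δ _).mp h U.1 h2) U.2.1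

lemma phiMap_homogeneous (Δ : SC n) (i : ℕ) (c : Mi Δ i → k) :
    phiMap k Δ i c ∈ homogeneousSubmodule (Fin n) k i := by
  refine Submodule.sum_mem _ fun U _ => Submodule.smul_mem _ _ ?_
  rw [mem_homogeneousSubmodule]
  exact isHomogeneous_monomial _ U.2.2

lemma decomp_mem_SRIdeal (Δ : SC n) (i : ℕ) (f : MvPolynomial (Fin n) k)
    (hf : f ∈ homogeneousSubmodule (Fin n) k i) :
    f - phiMap k Δ i (fun U => coeff U.1 f) ∈ SRIdeal k Δ := by
  rw [mem_SRIdeal_iff]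
  intro V hV hmem
  rw [mem_support_iff] at hV
  apply hV
  rw [coeff_sub, coeff_phiMap]
  by_cases hdeg : V.degree = i
  · rw [dif_pos ⟨hmem, hdeg⟩]
    exact sub_self _
  · rw [dif_neg (fun habs => hdeg habs.2)]
    rw [((mem_homogeneousSubmodule i f).mp hf).coeff_eq_zero hdeg, sub_zero]

end GroupActionsSRAux

namespace GroupActionsSRAux

open MvPolynomial

variable {n : ℕ} {k : Type} [Field k]

lemma degree_mapDomain (e : Equiv.Perm (Fin n)) (U : Fin n →₀ ℕ) :
    (Finsupp.mapDomain ⇑e U).degree = U.degree := by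
  classical
  rw [Finsupp.degree_apply, Finsupp.degree_apply]
  rw [Finsupp.mapDomain_support_of_injective e.injective U]
  rw [Finset.sum_image (fun a _ b _ hab => e.injective hab)]
  exact Finset.sum_congr rfl fun j _ => Finsupp.mapDomain_apply e.injective U j

/-- the permutation of `Mi Δ i` induced by a simplicial automorphism. -/
noncomputable def sigmaMi (Δ : SC n) (e : Equiv.Perm (Fin n))
    (he : ∀ σ ∈ Δ.faces, σ.image ⇑e ∈ Δ.faces) (i : ℕ) : Equiv.Perm (Mi Δ i) where
  toFun U := ⟨Finsupp.mapDomain ⇑e U.1, by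
    constructor
    · rw [Finsupp.mapDomain_support_of_injective e.injective]
      exact he _ U.2.1
    · rw [degree_mapDomain]
      exact U.2.2⟩
  invFun U := ⟨Finsupp.mapDomain ⇑e⁻¹ U.1, by
    constructor
    · rw [Finsupp.mapDomain_support_of_injective e⁻¹.injective]
      rw [← image_mem_faces_iff Δ e he]
      rw [Finset.image_image]
      have h1 : ⇑e ∘ ⇑e⁻¹ = id := by
        funext x
        simp
      rw [h1, Finset.image_id]
      exact U.2.1
    · rw [degree_mapDomain e⁻¹]
      exact U.2.2⟩
  left_inv U := by
    apply Subtype.ext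
    show Finsupp.mapDomain ⇑e⁻¹ (Finsupp.mapDomain ⇑e U.1) = U.1
    rw [← Finsupp.mapDomain_comp]
    have h1 : ⇑e⁻¹ ∘ ⇑e = id := by funext x; simp
    rw [h1, Finsupp.mapDomain_id]
  right_inv U := by
    apply Subtype.ext
    show Finsupp.mapDomain ⇑e (Finsupp.mapDomain ⇑e⁻¹ U.1) = U.1
    rw [← Finsupp.mapDomain_comp]
    have h1 : ⇑e ∘ ⇑e⁻¹ = id := by funext x; simp
    rw [h1, Finsupp.mapDomain_id]

lemma sigmaMi_pow_apply (Δ : SC n) (e : Equiv.Perm (Fin n))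
    (he : ∀ σ ∈ Δ.faces, σ.image ⇑e ∈ Δ.faces) (i : ℕ) (l : ℕ) (U : Mi Δ i) :
    (((sigmaMi Δ e he i) ^ l) U).1 = Finsupp.mapDomain ⇑(e ^ l) U.1 := by
  induction l with
  | zero =>
    show U.1 = Finsupp.mapDomain ⇑(1 : Equiv.Perm (Fin n)) U.1
    rw [show ⇑(1 : Equiv.Perm (Fin n)) = id from rfl, Finsupp.mapDomain_id]
  | succ m ih =>
    have h1 : ((sigmaMi Δ e he i) ^ (m + 1)) U = (sigmaMi Δ e he i) (((sigmaMi Δ e he i) ^ m) U) := by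
      rw [pow_succ']
      rfl
    rw [h1]
    show Finsupp.mapDomain ⇑e ((((sigmaMi Δ e he i) ^ m) U).1) = _
    rw [ih, ← Finsupp.mapDomain_comp]
    congr 1
    rw [pow_succ']
    rfl

lemma sigmaMi_pow_eq_one (Δ : SC n) (e : Equiv.Perm (Fin n))
    (he : ∀ σ ∈ Δ.faces, σ.image ⇑e ∈ Δ.faces) (i : ℕ) (p : ℕ) (hep : e ^ p = 1) :
    (sigmaMi Δ e he i) ^ p = 1 := by
  apply Equiv.ext
  intro U
  apply Subtype.ext
  rw [sigmaMi_pow_apply, hep]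
  show Finsupp.mapDomain ⇑(1 : Equiv.Perm (Fin n)) U.1 = U.1
  rw [show ⇑(1 : Equiv.Perm (Fin n)) = id from rfl, Finsupp.mapDomain_id]

lemma rename_phiMap (Δ : SC n) (e : Equiv.Perm (Fin n))
    (he : ∀ σ ∈ Δ.faces, σ.image ⇑e ∈ Δ.faces) (i : ℕ) (c : Mi Δ i → k) :
    rename ⇑e (phiMap k Δ i c) = phiMap k Δ i (permOp k (sigmaMi Δ e he i) c) := by
  classical
  have h0 : rename ⇑e (phiMap k Δ i c)
      = ∑ U : Mi Δ i, c U • monomial ((sigmaMi Δ e he i U).1) (1 : k) := by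
    rw [phiMap]
    simp only [LinearMap.coe_mk, AddHom.coe_mk]
    rw [map_sum]
    refine Finset.sum_congr rfl fun U _ => ?_
    rw [map_smul, rename_monomial]
    rfl
  rw [h0]
  rw [phiMap]
  simp only [LinearMap.coe_mk, AddHom.coe_mk]
  refine Fintype.sum_equiv (sigmaMi Δ e he i) _ _ fun U => ?_
  rw [permOp_apply, ← Equiv.Perm.mul_apply, inv_mul_cancel, Equiv.Perm.one_apply]

end GroupActionsSRAux

namespace GroupActionsSRAux

open MvPolynomial

variable {n : ℕ} {k : Type} [Field k]

lemma psi_injective (Δ : SC n) (i : ℕ) :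
    Function.Injective ((Ideal.Quotient.mkₐ k (SRIdeal k Δ)).toLinearMap.comp (phiMap k Δ i)) := by
  set ψ := (Ideal.Quotient.mkₐ k (SRIdeal k Δ)).toLinearMap.comp (phiMap k Δ i) with hψ
  suffices h0 : ∀ c, ψ c = 0 → c = 0 by
    intro c c' hcc
    have := h0 (c - c') (by rw [map_sub, hcc, sub_self])
    rwa [sub_eq_zero] at this
  intro c hc
  apply phiMap_mem_SRIdeal Δ i c
  rw [← Ideal.Quotient.eq_zero_iff_mem]
  exact hc

lemma pieceDimTot_eq (Δ : SC n) (i : ℕ) :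
    pieceDimTot k (SRIdeal k Δ) i = Fintype.card (Mi Δ i) := by
  classical
  have heq1 : Submodule.map (Ideal.Quotient.mkₐ k (SRIdeal k Δ)).toLinearMap
      (homogeneousSubmodule (Fin n) k i)
      = LinearMap.range
        ((Ideal.Quotient.mkₐ k (SRIdeal k Δ)).toLinearMap.comp (phiMap k Δ i)) := by
    apply le_antisymm
    · rintro x ⟨f, hf, rfl⟩
      refine ⟨fun U => coeff U.1 f, ?_⟩
      show (Ideal.Quotient.mkₐ k (SRIdeal k Δ)).toLinearMap (phiMap k Δ i _)
        = (Ideal.Quotient.mkₐ k (SRIdeal k Δ)).toLinearMap f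
      rw [← sub_eq_zero, ← map_sub]
      show Ideal.Quotient.mk (SRIdeal k Δ) _ = 0
      rw [Ideal.Quotient.eq_zero_iff_mem]
      have h2 := neg_mem (decomp_mem_SRIdeal Δ i f hf)
      rwa [neg_sub] at h2
    · rintro x ⟨c, rfl⟩
      exact ⟨phiMap k Δ i c, phiMap_homogeneous Δ i c, rfl⟩
  rw [pieceDimTot, heq1, LinearMap.finrank_range_of_inj (psi_injective Δ i),
    Module.finrank_pi]

set_option maxHeartbeats 1000000 in
lemma pieceDim_eq (Δ : SC n) (e : Equiv.Perm (Fin n))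
    (he : ∀ σ ∈ Δ.faces, σ.image ⇑e ∈ Δ.faces) (i : ℕ) (μ : k) :
    pieceDim k (SRIdeal k Δ) e i μ = Module.finrank k (LinearMap.ker
      (permOp k (sigmaMi Δ e he i)
        - μ • (LinearMap.id : (Mi Δ i → k) →ₗ[k] (Mi Δ i → k)))) := by
  classical
  set K := SRIdeal k Δ with hK
  set π : MvPolynomial (Fin n) k →ₗ[k] (MvPolynomial (Fin n) k ⧸ K) :=
    (Ideal.Quotient.mkₐ k K).toLinearMap with hπ
  set Φ := phiMap k Δ i with hΦ
  set L : MvPolynomial (Fin n) k →ₗ[k] MvPolynomial (Fin n) k :=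
    ((MvPolynomial.rename ⇑e :
        MvPolynomial (Fin n) k →ₐ[k] MvPolynomial (Fin n) k).toLinearMap
      - μ • LinearMap.id) with hL
  set Tμ : (Mi Δ i → k) →ₗ[k] (Mi Δ i → k) :=
    permOp k (sigmaMi Δ e he i)
      - μ • (LinearMap.id : (Mi Δ i → k) →ₗ[k] (Mi Δ i → k)) with hTμ
  have hπmk : ∀ f, π f = Ideal.Quotient.mk K f := fun _ => rfl
  have hLapp : ∀ f, L f = rename ⇑e f - μ • f := by
    intro f
    rw [hL, LinearMap.sub_apply, LinearMap.smul_apply, LinearMap.id_apply]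
    rfl
  have hLΦ : ∀ c : Mi Δ i → k, L (Φ c) = Φ (Tμ c) := by
    intro c
    rw [hLapp, hΦ, rename_phiMap Δ e he i c, hTμ, LinearMap.sub_apply, map_sub,
      LinearMap.smul_apply, LinearMap.id_apply, map_smul]
  have hLK : ∀ f ∈ K, L f ∈ K := by
    intro f hf
    rw [hLapp]
    refine sub_mem (SRIdeal_rename Δ e he f hf) ?_
    rw [Algebra.smul_def]
    exact Ideal.mul_mem_left _ _ hf
  have heq2 : Submodule.map π
      ((homogeneousSubmodule (Fin n) k i) ⊓
        Submodule.comap L (Submodule.restrictScalars k K))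
      = Submodule.map (π.comp Φ) (LinearMap.ker Tμ) := by
    apply le_antisymm
    · rintro x ⟨f, ⟨hfH, hfL⟩, rfl⟩
      set c : Mi Δ i → k := fun U => coeff U.1 f with hc
      have hb : f - Φ c ∈ K := decomp_mem_SRIdeal Δ i f hfH
      have hLf : L f ∈ K := hfL
      have hLb : L (f - Φ c) ∈ K := hLK _ hb
      have hLΦc : L (Φ c) ∈ K := by
        have h3 : L (Φ c) = L f - L (f - Φ c) := by rw [map_sub, sub_sub_cancel]
        rw [h3]
        exact sub_mem hLf hLb
      have hker : c ∈ LinearMap.ker Tμ := by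
        rw [LinearMap.mem_ker]
        apply phiMap_mem_SRIdeal Δ i
        rw [← hLΦ]
        exact hLΦc
      refine ⟨c, hker, ?_⟩
      show π (Φ c) = π f
      rw [← sub_eq_zero, ← map_sub, hπmk, Ideal.Quotient.eq_zero_iff_mem]
      have h4 := neg_mem hb
      rwa [neg_sub] at h4
    · rintro x ⟨c, hc, rfl⟩
      refine ⟨Φ c, ⟨phiMap_homogeneous Δ i c, ?_⟩, rfl⟩
      show L (Φ c) ∈ Submodule.restrictScalars k K
      rw [hLΦ, LinearMap.mem_ker.mp hc, map_zero]
      exact zero_mem _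
  have hfr : pieceDim k K e i μ = Module.finrank k (Submodule.map (π.comp Φ)
      (LinearMap.ker Tμ)) := by
    rw [pieceDim, heq2]
  rw [hfr]
  exact ((Submodule.equivMapOfInjective _ (psi_injective Δ i) _).finrank_eq).symm

end GroupActionsSRAux


/-- if `Δ` admits a free action of `ℤ/pℤ` then all eigenspaces of the
generator acting on `k[Δ]_i` for `i ≥ 1` have the same dimension `(1/p) dim_k k[Δ]_i`,
while `dim_k k[Δ]_0^0 = 1` and `dim_k k[Δ]_0^j = 0` for `0 < j < p`. -/
theorem stmt2_graded_piece_dims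
    (n p : ℕ) (hp : p.Prime) (k : Type) [Field k] [Algebra ℂ k]
    (ζ : k) (hζ : IsPrimitiveRoot ζ p)
    (Δ : SC n) (e : Equiv.Perm (Fin n)) (hfree : FreeActionBy Δ e p) :
    (∀ i : ℕ, 1 ≤ i → ∀ j < p,
        p * pieceDim k (SRIdeal k Δ) e i (ζ ^ j) = pieceDimTot k (SRIdeal k Δ) i) ∧
    pieceDim k (SRIdeal k Δ) e 0 (ζ ^ 0) = 1 ∧
    (∀ j : ℕ, 0 < j → j < p → pieceDim k (SRIdeal k Δ) e 0 (ζ ^ j) = 0) := by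
  classical
  obtain ⟨hep, he, hfr⟩ := hfree
  haveI : CharZero k := charZero_of_injective_algebraMap (algebraMap ℂ k).injective
  have hpk : (p : k) ≠ 0 := Nat.cast_ne_zero.mpr hp.ne_zero
  -- degree-zero analysis
  have hcard0 : Fintype.card (GroupActionsSRAux.Mi Δ 0) = 1 := by
    rw [Fintype.card_eq_one_iff]
    refine ⟨GroupActionsSRAux.mkMi Δ 0 0 ⟨by rw [Finsupp.support_zero]; exact Δ.empty_mem, map_zero _⟩,
      fun y => ?_⟩
    apply Subtype.ext
    show y.1 = 0
    exact (Finsupp.degree_eq_zero_iff y.1).mp y.2.2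
  have hperm : GroupActionsSRAux.permOp k (GroupActionsSRAux.sigmaMi Δ e he 0) = (LinearMap.id : (GroupActionsSRAux.Mi Δ 0 → k) →ₗ[k] (GroupActionsSRAux.Mi Δ 0 → k)) := by
    haveI : Subsingleton (GroupActionsSRAux.Mi Δ 0) := by
      constructor
      intro a b
      apply Subtype.ext
      rw [(Finsupp.degree_eq_zero_iff a.1).mp a.2.2, (Finsupp.degree_eq_zero_iff b.1).mp b.2.2]
    refine LinearMap.ext fun c => funext fun U => ?_
    show c ((GroupActionsSRAux.sigmaMi Δ e he 0)⁻¹ U) = c U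
    exact congrArg c (Subsingleton.elim _ _)
  have hker0 : ∀ μ : k, μ ≠ 1 →
      LinearMap.ker (GroupActionsSRAux.permOp k (GroupActionsSRAux.sigmaMi Δ e he 0)
        - μ • (LinearMap.id : (GroupActionsSRAux.Mi Δ 0 → k) →ₗ[k] (GroupActionsSRAux.Mi Δ 0 → k))) = ⊥ := by
    intro μ hμ
    rw [hperm, Submodule.eq_bot_iff]
    intro c hc
    rw [LinearMap.mem_ker, LinearMap.sub_apply, LinearMap.smul_apply, LinearMap.id_apply,
      sub_eq_zero] at hc
    have h1 : ((1 : k) - μ) • c = 0 := by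
      rw [sub_smul, one_smul, ← hc, sub_self]
    have h2 : (1 : k) - μ ≠ 0 := sub_ne_zero.mpr (fun habs => hμ habs.symm)
    exact (smul_eq_zero.mp h1).resolve_left h2
  refine ⟨?_, ?_, ?_⟩
  · intro i hi j hj
    rw [GroupActionsSRAux.pieceDim_eq Δ e he i (ζ ^ j), GroupActionsSRAux.pieceDimTot_eq Δ i]
    apply GroupActionsSRAux.core hp hpk hζ _ (GroupActionsSRAux.sigmaMi_pow_eq_one Δ e he i p hep)
    intro U l hl0 hlp hUl
    have h1 : Finsupp.mapDomain ⇑(e ^ l) U.1 = U.1 := by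
      rw [← GroupActionsSRAux.sigmaMi_pow_apply Δ e he i l U, hUl]
    have h2 : U.1.support.image ⇑(e ^ l) = U.1.support := by
      rw [← Finsupp.mapDomain_support_of_injective (e ^ l).injective U.1, h1]
    have hne : U.1.support ≠ ∅ := by
      intro habs
      have h3 := U.2.2
      rw [Finsupp.support_eq_empty.mp habs, map_zero] at h3
      omega
    exact hfr U.1.support U.2.1 hne l hl0 hlp h2
  · rw [pow_zero, GroupActionsSRAux.pieceDim_eq Δ e he 0 1, hperm, one_smul, sub_self, LinearMap.ker_zero,
      finrank_top, Module.finrank_pi, hcard0]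
  · intro j hj0 hjp
    rw [GroupActionsSRAux.pieceDim_eq Δ e he 0 (ζ ^ j), hker0 _ (hζ.pow_ne_one_of_pos_of_lt hj0.ne' hjp),
      finrank_bot]


end GroupActionsSR
end

section
/- Let Δ be a (d−1)-dimensional simplicial complex admitting a very free action by G=ℤ/pℤ over a field k extending ℂ, and let δ_1,…,δ_d be integers with 0 ≤ δ_i ≤ p−1. Then there exists a linear system of parameters Θ = (θ_1,…,θ_d) for k[Δ] such that θ_i ∈ A_1^{δ_i} for i = 1,…,d, i.e., each θ_i is a linear form with g·θ_i = ζ^{δ_i} θ_i. -/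
/-!
Common framework: abstract simplicial complexes on `Fin n`, their `f`- and `h`-vectors,
(relative) simplicial cohomology with field coefficients, free actions of `ℤ/pℤ` given by a
permutation `e`, eigen-Betti numbers, Stanley--Reisner ideals and graded/equivariant pieces of
Artinian reductions.
-/

namespace GroupActionsSR

open scoped BigOperators

variable {n : ℕ}

section Aux

open MvPolynomial Submodule

theorem avoidance (k : Type*) [Field k] [Infinite k] {M : Type*} [AddCommGroup M] [Module k M]
    {ι : Type*} (s : Finset ι) (p : ι → Submodule k M) (E : Submodule k M)
    (h : ∀ i ∈ s, ¬ E ≤ p i) : ∃ x ∈ E, ∀ i ∈ s, x ∉ p i := by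
  classical
  induction s using Finset.induction_on with
  | empty => exact ⟨0, E.zero_mem, by simp⟩
  | @insert i s hi IH =>
    obtain ⟨x, hxE, hx⟩ := IH (fun j hj => h j (Finset.mem_insert_of_mem hj))
    obtain ⟨y, hyE, hy⟩ : ∃ y ∈ E, y ∉ p i := by
      have := h i (Finset.mem_insert_self i s)
      simpa [SetLike.le_def] using this
    by_cases hxi : x ∉ p i
    · refine ⟨x, hxE, fun j hj => ?_⟩
      rcases Finset.mem_insert.mp hj with rfl | hj
      · exact hxi
      · exact hx j hj
    push_neg at hxi
    -- consider x + c • y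
    have hbad : ∀ j ∈ s, ∀ c c' : k, x + c • y ∈ p j → x + c' • y ∈ p j → c = c' := by
      intro j hj c c' h1 h2
      by_contra hne
      have h3 : (c - c') • y ∈ p j := by
        have := (p j).sub_mem h1 h2
        simpa [sub_smul] using this
      have hy' : y ∈ p j := by
        have := (p j).smul_mem (c - c')⁻¹ h3
        rwa [smul_smul, inv_mul_cancel₀ (sub_ne_zero.mpr hne), one_smul] at this
      have hx' : x ∈ p j := by
        have := (p j).sub_mem h1 ((p j).smul_mem c hy')
        simpa using this
      exact hx j hj hx'
    -- bad set of c's is finite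
    have hfin : {c : k | c = 0 ∨ ∃ j ∈ s, x + c • y ∈ p j}.Finite := by
      have h1 : ({(0:k)} : Set k).Finite := Set.finite_singleton 0
      have h2 : (⋃ j ∈ s, {c : k | x + c • y ∈ p j}).Finite :=
        Set.Finite.biUnion s.finite_toSet
          (fun j hj => Set.Subsingleton.finite (fun c hc c' hc' => hbad j hj c c' hc hc'))
      refine (h1.union h2).subset ?_
      intro c hc
      rcases hc with rfl | ⟨j, hj, hcj⟩
      · exact Or.inl rfl
      · exact Or.inr (Set.mem_biUnion hj hcj)
    obtain ⟨c, hc⟩ := hfin.infinite_compl.nonempty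
    simp only [Set.mem_compl_iff, Set.mem_setOf_eq, not_or] at hc
    refine ⟨x + c • y, E.add_mem hxE (E.smul_mem c hyE), fun j hj => ?_⟩
    rcases Finset.mem_insert.mp hj with rfl | hj
    · intro hmem
      have : c • y ∈ p j := by
        have := (p j).sub_mem hmem hxi
        simpa using this
      have : y ∈ p j := by
        have h2 := (p j).smul_mem c⁻¹ this
        rwa [smul_smul, inv_mul_cancel₀ hc.1, one_smul] at h2
      exact hy this
    · intro hmem
      exact hc.2 ⟨j, hj, hmem⟩

variable {k : Type} [Field k] {d : ℕ}

variable (k) in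
lemma nonface_mem {Δ : SC n} {U : Fin n →₀ ℕ} (h : U.support ∉ Δ.faces) :
    monomial U (1 : k) ∈ SRIdeal k Δ := by
  have hdvd : (∏ i ∈ U.support, X i : MvPolynomial (Fin n) k) ∣ monomial U 1 := by
    rw [monomial_eq, C_1, one_mul, Finsupp.prod]
    exact Finset.prod_dvd_prod_of_dvd _ _ (fun i hi =>
      dvd_pow_self (X i) (Finsupp.mem_support_iff.mp hi))
  obtain ⟨c, hc⟩ := hdvd
  rw [hc]
  exact Ideal.mul_mem_right _ _ (Ideal.subset_span ⟨U.support, h, rfl⟩)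

lemma coreJ {Δ : SC n} (hdim1 : ∀ σ ∈ Δ.faces, σ.card ≤ d)
    (Θ : Fin d → MvPolynomial (Fin n) k)
    (HS : ∀ σ ∈ Δ.faces, ∀ v ∈ σ, (X v : MvPolynomial (Fin n) k) ∈
      span k (Set.range Θ ∪ (X '' {w | w ∉ σ})))
    (U : Fin n →₀ ℕ) (hdeg : d + 1 ≤ U.sum fun _ m => m)
    (IH : ∀ U' : Fin n →₀ ℕ, U.support ⊂ U'.support →
      (U'.sum fun _ m => m) = (U.sum fun _ m => m) →
      monomial U' (1 : k) ∈ SRIdeal k Δ ⊔ Ideal.span (Set.range Θ)) :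
    monomial U (1 : k) ∈ SRIdeal k Δ ⊔ Ideal.span (Set.range Θ) := by
  classical
  set J : Ideal (MvPolynomial (Fin n) k) := SRIdeal k Δ ⊔ Ideal.span (Set.range Θ) with hJ
  have hsmul : ∀ (c : k) (f : MvPolynomial (Fin n) k), f ∈ J → c • f ∈ J := by
    intro c f hf
    rw [Algebra.smul_def, algebraMap_eq]
    exact Ideal.mul_mem_left _ _ hf
  by_cases hσ : U.support ∈ Δ.faces
  swap
  · exact le_sup_left (α := Ideal (MvPolynomial (Fin n) k)) (nonface_mem k hσ)
  obtain ⟨v, hv, hv2⟩ : ∃ v ∈ U.support, 2 ≤ U v := by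
    by_contra hcon
    push_neg at hcon
    have hle : (U.sum fun _ m => m) ≤ U.support.card := by
      rw [Finsupp.sum]
      calc ∑ i ∈ U.support, U i ≤ ∑ _i ∈ U.support, 1 :=
            Finset.sum_le_sum (fun i hi => by have := hcon i hi; omega)
        _ = U.support.card := by simp
    have := hdim1 _ hσ
    omega
  set U' := U - Finsupp.single v 1 with hU'
  have hsupp' : U'.support = U.support := by
    ext w
    rcases eq_or_ne v w with rfl | hw
    · simp only [hU', Finsupp.mem_support_iff, Finsupp.coe_tsub, Pi.sub_apply,
        Finsupp.single_eq_same]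
      omega
    · simp [hU', Finsupp.mem_support_iff, Finsupp.coe_tsub, Pi.sub_apply,
        Finsupp.single_eq_of_ne' hw]
  have hUeq : U = U' + Finsupp.single v 1 := by
    ext w
    rcases eq_or_ne v w with rfl | hw
    · simp only [hU', Finsupp.add_apply, Finsupp.coe_tsub, Pi.sub_apply,
        Finsupp.single_eq_same]
      omega
    · simp [hU', Finsupp.coe_tsub, Pi.sub_apply, Finsupp.single_eq_of_ne' hw]
  have hdeg' : (U'.sum fun _ m => m) + 1 = U.sum fun _ m => m := by
    conv_rhs => rw [hUeq]
    rw [Finsupp.sum_add_index' (fun _ => rfl) (fun _ _ _ => rfl),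
      Finsupp.sum_single_index rfl]
  have key := HS U.support hσ v hv
  have main : ∀ f ∈ span k (Set.range Θ ∪ (X '' {w | w ∉ U.support})),
      f * monomial U' (1 : k) ∈ J := by
    intro f hf
    induction hf using Submodule.span_induction with
    | mem f hfmem =>
      rcases hfmem with ⟨i, rfl⟩ | ⟨w, hw, rfl⟩
      · refine Ideal.mul_mem_right _ _ ?_
        exact le_sup_right (α := Ideal (MvPolynomial (Fin n) k))
          (Ideal.subset_span ⟨i, rfl⟩)
      · rw [X, monomial_mul, one_mul, add_comm]
        set U'' := U' + Finsupp.single w 1 with hU''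
        have hw' : w ∉ U.support := hw
        have hsupp'' : U''.support = insert w U.support := by
          ext x
          rcases eq_or_ne w x with rfl | hx
          · simp only [hU'', Finsupp.mem_support_iff, Finsupp.add_apply,
              Finsupp.single_eq_same, Finset.mem_insert]
            constructor
            · intro _; exact Or.inl trivial
            · intro _; omega
          · have hxx : (U' x ≠ 0) ↔ (U x ≠ 0) := by
              rw [← Finsupp.mem_support_iff, ← Finsupp.mem_support_iff, hsupp']
            simp only [hU'', Finsupp.mem_support_iff, Finsupp.add_apply,
              Finsupp.single_eq_of_ne' hx, add_zero, Finset.mem_insert]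
            simp [hxx, Ne.symm hx]
        have hdeg'' : (U''.sum fun _ m => m) = U.sum fun _ m => m := by
          rw [hU'', Finsupp.sum_add_index' (fun _ => rfl) (fun _ _ _ => rfl),
            Finsupp.sum_single_index rfl, hdeg']
        by_cases hface : U''.support ∈ Δ.faces
        · refine IH U'' ?_ hdeg''
          rw [hsupp'']
          exact Finset.ssubset_insert hw'
        · exact le_sup_left (α := Ideal (MvPolynomial (Fin n) k)) (nonface_mem k hface)
    | zero => simp only [zero_mul]; exact J.zero_mem
    | add f g _ _ hf hg => rw [add_mul]; exact J.add_mem hf hg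
    | smul c f _ hf => rw [smul_mul_assoc]; exact hsmul c _ hf
  have : monomial U (1 : k) = X v * monomial U' 1 := by
    rw [X, monomial_mul, one_mul, add_comm, ← hUeq]
  rw [this]
  exact main _ key

lemma memJ {Δ : SC n} (hdim1 : ∀ σ ∈ Δ.faces, σ.card ≤ d)
    (Θ : Fin d → MvPolynomial (Fin n) k)
    (HS : ∀ σ ∈ Δ.faces, ∀ v ∈ σ, (X v : MvPolynomial (Fin n) k) ∈
      span k (Set.range Θ ∪ (X '' {w | w ∉ σ})))
    (U : Fin n →₀ ℕ) (hdeg : d + 1 ≤ U.sum fun _ m => m) :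
    monomial U (1 : k) ∈ SRIdeal k Δ ⊔ Ideal.span (Set.range Θ) := by
  classical
  set J : Ideal (MvPolynomial (Fin n) k) := SRIdeal k Δ ⊔ Ideal.span (Set.range Θ) with hJ
  -- J is closed under k-smul
  have hsmul : ∀ (c : k) (f : MvPolynomial (Fin n) k), f ∈ J → c • f ∈ J := by
    intro c f hf
    rw [Algebra.smul_def, algebraMap_eq]
    exact Ideal.mul_mem_left _ _ hf
  -- strong induction on n - card of support
  suffices H : ∀ t : ℕ, ∀ U : Fin n →₀ ℕ, n - U.support.card ≤ t →
      d + 1 ≤ (U.sum fun _ m => m) → monomial U (1 : k) ∈ J by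
    exact H n U (Nat.sub_le _ _) hdeg
  intro t
  induction t with
  | zero =>
    intro U hcard hdeg
    refine coreJ hdim1 Θ HS U hdeg (fun U' hss _ => ?_)
    exfalso
    have h1 := Finset.card_lt_card hss
    have h2 : U'.support.card ≤ n := (Finset.card_le_univ _).trans_eq (by simp)
    omega
  | succ t IH =>
    intro U hcard hdeg
    refine coreJ hdim1 Θ HS U hdeg (fun U' hss hdeq => IH U' ?_ (by omega))
    have h1 : U.support.card < U'.support.card := Finset.card_lt_card hss
    have h2 : U'.support.card ≤ n := (Finset.card_le_univ _).trans_eq (by simp)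
    omega

lemma fd_of_star {Δ : SC n} (hdim1 : ∀ σ ∈ Δ.faces, σ.card ≤ d)
    (Θ : Fin d → MvPolynomial (Fin n) k)
    (HS : ∀ σ ∈ Δ.faces, ∀ v ∈ σ, (X v : MvPolynomial (Fin n) k) ∈
      span k (Set.range Θ ∪ (X '' {w | w ∉ σ}))) :
    FiniteDimensional k
      (MvPolynomial (Fin n) k ⧸ (SRIdeal k Δ ⊔ Ideal.span (Set.range Θ))) := by
  classical
  set J : Ideal (MvPolynomial (Fin n) k) := SRIdeal k Δ ⊔ Ideal.span (Set.range Θ) with hJ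
  set Qa := Ideal.Quotient.mkₐ k J with hQa
  set T : Finset (Fin n →₀ ℕ) := (Finset.univ : Finset (Fin n → Fin (d + 1))).image
    (fun f => Finsupp.equivFunOnFinite.symm (fun i => ((f i : ℕ)))) with hT
  set T' : Finset (MvPolynomial (Fin n) k ⧸ J) :=
    T.image (fun U => Qa (monomial U 1)) with hT'
  have hUT : ∀ U : Fin n →₀ ℕ, (U.sum fun _ m => m) ≤ d → U ∈ T := by
    intro U hU
    have hb : ∀ i, U i ≤ d := by
      intro i
      by_cases hi : U i = 0
      · omega
      · refine le_trans ?_ hU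
        rw [Finsupp.sum]
        exact Finset.single_le_sum (fun _ _ => Nat.zero_le _)
          (Finsupp.mem_support_iff.mpr hi)
    refine Finset.mem_image.mpr ⟨fun i => ⟨U i, by have := hb i; omega⟩,
      Finset.mem_univ _, ?_⟩
    ext i
    simp [Finsupp.equivFunOnFinite]
  have hspan : span k ((T' : Set (MvPolynomial (Fin n) k ⧸ J))) = ⊤ := by
    rw [eq_top_iff]
    rintro x -
    obtain ⟨f, rfl⟩ : ∃ f, Qa f = x := Ideal.Quotient.mkₐ_surjective k _ x
    rw [← support_sum_monomial_coeff f, map_sum]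
    refine Submodule.sum_mem _ (fun U _ => ?_)
    have : monomial U (coeff U f) = (coeff U f) • monomial U (1 : k) := by
      rw [smul_monomial, smul_eq_mul, mul_one]
    rw [this, map_smul]
    by_cases hU : (U.sum fun _ m => m) ≤ d
    · exact Submodule.smul_mem _ _ (Submodule.subset_span
        (Finset.mem_coe.mpr (Finset.mem_image.mpr ⟨U, hUT U hU, rfl⟩)))
    · have : monomial U (1 : k) ∈ J := memJ hdim1 Θ HS U (by omega)
      have hz : Qa (monomial U (1 : k)) = 0 := by
        rwa [Ideal.Quotient.mkₐ_eq_mk, Ideal.Quotient.eq_zero_iff_mem]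
      rw [hz, smul_zero]
      exact Submodule.zero_mem _
  exact ⟨⟨T', hspan⟩⟩

section Construction
variable (p : ℕ) (ζ : k) (e : Equiv.Perm (Fin n))

/-- orbit eigenvector attached to a vertex. -/
noncomputable def yv (m : ℕ) (v : Fin n) : MvPolynomial (Fin n) k :=
  ∑ l ∈ Finset.range p, ((ζ ^ m)⁻¹) ^ l • X ((e ^ l) v)

lemma yv_hom (m : ℕ) (v : Fin n) :
    yv p ζ e m v ∈ homogeneousSubmodule (Fin n) k 1 :=
  Submodule.sum_mem _ fun l _ => Submodule.smul_mem _ _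
    ((mem_homogeneousSubmodule _ _).mpr (isHomogeneous_X k _))

lemma yv_eig (hp : 0 < p) (hζ : ζ ^ p = 1) (hζ0 : ζ ≠ 0) (he : e ^ p = 1)
    (m : ℕ) (v : Fin n) :
    rename (⇑e) (yv p ζ e m v) = ζ ^ m • yv p ζ e m v := by
  classical
  set g : ℕ → MvPolynomial (Fin n) k :=
    fun l => ((ζ ^ m)⁻¹) ^ l • X ((e ^ l) v) with hg
  have hζm : (ζ : k) ^ m ≠ 0 := pow_ne_zero _ hζ0
  have hgp : g p = g 0 := by
    have h0 : ((ζ ^ m) : k) ^ p = 1 := by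
      rw [← pow_mul, mul_comm, pow_mul, hζ, one_pow]
    have h1 : ((ζ ^ m)⁻¹ : k) ^ p = 1 := by
      rw [inv_pow, h0, inv_one]
    simp only [hg, h1, he, pow_zero, one_smul, Equiv.Perm.one_apply]
  have hstep : ∀ l, rename (⇑e) (g l) = ζ ^ m • g (l + 1) := by
    intro l
    rw [hg]
    simp only [map_smul, rename_X]
    have h1 : e ((e ^ l) v) = (e ^ (l + 1)) v := by
      rw [pow_succ', Equiv.Perm.mul_apply]
    rw [h1, smul_smul]
    congr 1
    rw [pow_succ', ← mul_assoc, mul_inv_cancel₀ hζm, one_mul]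
  have hshift : ∑ l ∈ Finset.range p, g (l + 1) = ∑ l ∈ Finset.range p, g l := by
    have h1 : ∑ l ∈ Finset.range (p + 1), g l
        = (∑ l ∈ Finset.range p, g (l + 1)) + g 0 := Finset.sum_range_succ' g p
    have h2 : ∑ l ∈ Finset.range (p + 1), g l
        = (∑ l ∈ Finset.range p, g l) + g p := Finset.sum_range_succ g p
    rw [h1, hgp] at h2
    exact add_right_cancel h2
  calc rename (⇑e) (yv p ζ e m v) = ∑ l ∈ Finset.range p, rename (⇑e) (g l) := by
        rw [yv, map_sum]
    _ = ∑ l ∈ Finset.range p, ζ ^ m • g (l + 1) := by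
        exact Finset.sum_congr rfl fun l _ => hstep l
    _ = ζ ^ m • ∑ l ∈ Finset.range p, g (l + 1) := by rw [Finset.smul_sum]
    _ = ζ ^ m • yv p ζ e m v := by rw [hshift]; rfl

lemma yv_restrict {Δ : SC n} (hvf : VeryFreeActionBy Δ e p) (hp : 0 < p)
    {σ : Finset (Fin n)} (hσ : σ ∈ Δ.faces) {v : Fin n} (hv : v ∈ σ) (m : ℕ) :
    aeval (fun w => if w ∈ σ then (X w : MvPolynomial (Fin n) k) else 0)
      (yv p ζ e m v) = X v := by
  classical
  have horb : ∀ l, 0 < l → l < p → (e ^ l) v ∉ σ := by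
    intro l hl0 hlp hmem
    have h1 : ({v} : Finset (Fin n)) ∈ Δ.faces :=
      Δ.down_closed σ hσ {v} (Finset.singleton_subset_iff.mpr hv)
    have h2 : σ ∈ starF Δ {v} := by
      rw [starF, Finset.mem_filter]
      exact ⟨hσ, by
        have hu : {v} ∪ σ = σ := Finset.union_eq_right.mpr (Finset.singleton_subset_iff.mpr hv)
        rwa [hu]⟩
    have h3 : σ ∈ starF Δ (({v} : Finset (Fin n)).image ⇑(e ^ l)) := by
      rw [Finset.image_singleton, starF, Finset.mem_filter]
      exact ⟨hσ, by
        have hu : {(e ^ l) v} ∪ σ = σ :=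
          Finset.union_eq_right.mpr (Finset.singleton_subset_iff.mpr hmem)
        rwa [hu]⟩
    have := hvf.2.2 {v} h1 (by simp) l hl0 hlp σ h2 h3
    rw [this] at hv
    exact absurd hv (Finset.notMem_empty v)
  rw [yv, map_sum]
  rw [Finset.sum_eq_single_of_mem 0 (Finset.mem_range.mpr hp)]
  · simp [hv]
  · intro l hl hl0
    have hnot : (e ^ l) v ∉ σ := horb l (Nat.pos_of_ne_zero hl0) (Finset.mem_range.mp hl)
    simp [map_smul, aeval_X, if_neg hnot]

/-- the eigenspace spanned by the orbit eigenvectors. -/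
noncomputable def Esp (m : ℕ) : Submodule k (MvPolynomial (Fin n) k) :=
  span k (Set.range (yv p ζ e m))

/-- partial spans used in the inductive construction. -/
noncomputable def Vsp (θ : ℕ → MvPolynomial (Fin n) k) (σ : Finset (Fin n)) (j : ℕ) :
    Submodule k (MvPolynomial (Fin n) k) :=
  span k ((X '' {w | w ∉ σ}) ∪ (θ '' Set.Iio j))

lemma Vsp_fd (θ : ℕ → MvPolynomial (Fin n) k) (σ : Finset (Fin n)) (j : ℕ) :
    FiniteDimensional k (Vsp θ σ j) :=
  FiniteDimensional.span_of_finite k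
    ((Set.toFinite _).union ((Set.finite_Iio j).image θ))

lemma notTop {Δ : SC n} (hvf : VeryFreeActionBy Δ e p) (hp : 0 < p)
    {σ : Finset (Fin n)} (hσ : σ ∈ Δ.faces) {j : ℕ} (hj : j < σ.card)
    (θ : ℕ → MvPolynomial (Fin n) k) (m : ℕ) :
    ¬ (Esp p ζ e m ≤ Vsp θ σ j) := by
  classical
  intro hle
  set R : MvPolynomial (Fin n) k →ₗ[k] MvPolynomial (Fin n) k :=
    (aeval (fun w => if w ∈ σ then (X w : MvPolynomial (Fin n) k) else 0) :
      MvPolynomial (Fin n) k →ₐ[k] MvPolynomial (Fin n) k).toLinearMap with hR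
  set U : Submodule k (MvPolynomial (Fin n) k) :=
    span k ((fun i => R (θ i)) '' Set.Iio j) with hU
  have hmap : Submodule.map R (Vsp θ σ j) ≤ U := by
    rw [Vsp, Submodule.map_span, Set.image_union]
    rw [span_le]
    rintro z (⟨-, ⟨w, hw, rfl⟩, rfl⟩ | ⟨-, ⟨i, hi, rfl⟩, rfl⟩)
    · have : R (X w) = 0 := by
        simp only [hR, AlgHom.toLinearMap_apply, aeval_X, if_neg hw]
      rw [this]; exact U.zero_mem
    · exact subset_span ⟨i, hi, rfl⟩
  have hXmem : ∀ v ∈ σ, (X v : MvPolynomial (Fin n) k) ∈ U := by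
    intro v hv
    have h1 : yv p ζ e m v ∈ Vsp θ σ j := hle (subset_span ⟨v, rfl⟩)
    have h2 : R (yv p ζ e m v) ∈ Submodule.map R (Vsp θ σ j) :=
      Submodule.mem_map_of_mem h1
    have h3 : R (yv p ζ e m v) = X v := yv_restrict p ζ e hvf hp hσ hv m
    rw [h3] at h2
    exact hmap h2
  -- the X v, v ∈ σ, are linearly independent and lie in U
  haveI : FiniteDimensional k U :=
    FiniteDimensional.span_of_finite k ((Set.finite_Iio j).image _)
  have hli : LinearIndependent k (fun v : {v // v ∈ σ} => (X (v : Fin n) :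
      MvPolynomial (Fin n) k)) :=
    (MvPolynomial.linearIndependent_X (Fin n) k).comp _ Subtype.val_injective
  have hli2 : LinearIndependent k
      (fun v : {v // v ∈ σ} => (⟨X (v : Fin n), hXmem v v.2⟩ : U)) := by
    apply LinearIndependent.of_comp U.subtype
    exact hli
  have hcard : σ.card ≤ Module.finrank k U := by
    have := hli2.fintype_card_le_finrank
    rwa [Fintype.card_coe] at this
  have hUle : Module.finrank k U ≤ j := by
    have h1 : ((fun i => R (θ i)) '' Set.Iio j)
        = ↑((Finset.range j).image (fun i => R (θ i))) := by
      rw [Finset.coe_image, Finset.coe_range]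
    have h2 := finrank_span_finset_le_card (R := k)
      ((Finset.range j).image (fun i => R (θ i)))
    rw [Set.finrank] at h2
    refine le_trans ?_ (le_trans h2 ?_)
    · rw [hU, h1]
    · exact Finset.card_image_le.trans (by simp)
  omega

/-- invariant of the inductive construction. -/
def InvP (Δ : SC n) (θ : ℕ → MvPolynomial (Fin n) k) (j : ℕ) : Prop :=
  ∀ σ ∈ Δ.faces, n - σ.card + min j σ.card ≤ Module.finrank k (Vsp θ σ j)

lemma invP_zero (Δ : SC n) (θ : ℕ → MvPolynomial (Fin n) k) : InvP Δ θ 0 := by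
  classical
  intro σ hσ
  haveI := Vsp_fd θ σ 0
  have hmem : ∀ w : {w // w ∉ σ}, (X (w : Fin n) : MvPolynomial (Fin n) k) ∈ Vsp θ σ 0 :=
    fun w => subset_span (Or.inl ⟨w, w.2, rfl⟩)
  have hli : LinearIndependent k (fun w : {w // w ∉ σ} => (X (w : Fin n) :
      MvPolynomial (Fin n) k)) :=
    (MvPolynomial.linearIndependent_X (Fin n) k).comp _ Subtype.val_injective
  have hli2 : LinearIndependent k
      (fun w : {w // w ∉ σ} => (⟨X (w : Fin n), hmem w⟩ : Vsp θ σ 0)) := by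
    apply LinearIndependent.of_comp (Vsp θ σ 0).subtype
    exact hli
  have hcard := hli2.fintype_card_le_finrank
  have hcc : Fintype.card {w // w ∉ σ} = n - σ.card := by
    have := Fintype.card_subtype_compl (fun w : Fin n => w ∈ σ)
    simpa [Fintype.card_coe] using this
  have hmin : min 0 σ.card = 0 := Nat.zero_min _
  rw [hmin]
  omega

lemma vsp_update (θ : ℕ → MvPolynomial (Fin n) k) (j : ℕ)
    (x : MvPolynomial (Fin n) k) (σ : Finset (Fin n)) :
    Vsp (Function.update θ j x) σ (j + 1) = Vsp θ σ j ⊔ span k {x} := by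
  classical
  have himg : (Function.update θ j x) '' Set.Iio (j + 1) = (θ '' Set.Iio j) ∪ {x} := by
    ext z
    simp only [Set.mem_image, Set.mem_Iio, Set.mem_union, Set.mem_singleton_iff]
    constructor
    · rintro ⟨i, hi, rfl⟩
      rcases eq_or_ne i j with rfl | hne
      · right; rw [Function.update_self]
      · left; exact ⟨i, by omega, by rw [Function.update_of_ne hne]⟩
    · rintro (⟨i, hi, rfl⟩ | hz)
      · exact ⟨i, by omega, by rw [Function.update_of_ne (by omega : i ≠ j)]⟩
      · exact ⟨j, by omega, by rw [Function.update_self, hz]⟩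
  rw [Vsp, Vsp, himg, ← Set.union_assoc, Submodule.span_union]

lemma invP_step {Δ : SC n} [Infinite k] (hvf : VeryFreeActionBy Δ e p) (hp : 0 < p)
    (θ : ℕ → MvPolynomial (Fin n) k) (j m : ℕ) (hInv : InvP Δ θ j) :
    ∃ x ∈ Esp p ζ e m, InvP Δ (Function.update θ j x) (j + 1) := by
  classical
  obtain ⟨x, hxE, hx⟩ := avoidance k (Δ.faces.filter (fun σ => j < σ.card))
    (fun σ => Vsp θ σ j) (Esp p ζ e m)
    (fun σ hσ => notTop p ζ e hvf hp (Finset.mem_filter.mp hσ).1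
      (Finset.mem_filter.mp hσ).2 θ m)
  refine ⟨x, hxE, ?_⟩
  intro σ hσ
  have hVrw := vsp_update θ j x σ
  haveI h1 : FiniteDimensional k (Vsp (Function.update θ j x) σ (j + 1)) :=
    Vsp_fd _ σ (j + 1)
  haveI h2 : FiniteDimensional k ↥(Vsp θ σ j ⊔ span k {x}) := hVrw ▸ h1
  have hIσ := hInv σ hσ
  by_cases hc : j < σ.card
  · have hxV : x ∉ Vsp θ σ j := hx σ (Finset.mem_filter.mpr ⟨hσ, hc⟩)
    have hlt : Vsp θ σ j < Vsp θ σ j ⊔ span k {x} := by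
      refine lt_of_le_of_ne le_sup_left (fun heq => hxV ?_)
      rw [heq]
      exact (le_sup_right : span k {x} ≤ Vsp θ σ j ⊔ span k {x})
        (Submodule.mem_span_singleton_self x)
    have hfr := Submodule.finrank_lt_finrank_of_lt hlt
    have hm1 : min j σ.card = j := min_eq_left (le_of_lt hc)
    have hm2 : min (j + 1) σ.card = j + 1 := min_eq_left hc
    rw [hVrw, hm2]
    omega
  · have hle : Vsp θ σ j ≤ Vsp θ σ j ⊔ span k {x} := le_sup_left
    have hfr := Submodule.finrank_mono hle
    have hm1 : min j σ.card = σ.card := min_eq_right (by omega)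
    have hm2 : min (j + 1) σ.card = σ.card := min_eq_right (by omega)
    rw [hVrw, hm2]
    omega

lemma exists_chain {Δ : SC n} [Infinite k] (hvf : VeryFreeActionBy Δ e p) (hp : 0 < p)
    (δ' : ℕ → ℕ) :
    ∀ j : ℕ, ∃ θ : ℕ → MvPolynomial (Fin n) k,
      (∀ i < j, θ i ∈ Esp p ζ e (δ' i)) ∧ InvP Δ θ j := by
  intro j
  induction j with
  | zero => exact ⟨fun _ => 0, fun i hi => absurd hi (by omega), invP_zero Δ _⟩
  | succ j IH =>
    obtain ⟨θ, hθE, hθI⟩ := IH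
    obtain ⟨x, hxE, hxI⟩ := invP_step p ζ e hvf hp θ j (δ' j) hθI
    refine ⟨Function.update θ j x, ?_, hxI⟩
    intro i hi
    rcases eq_or_ne i j with rfl | hne
    · rwa [Function.update_self]
    · rw [Function.update_of_ne hne]
      exact hθE i (by omega)

end Construction

end Aux

open MvPolynomial Submodule in
/-- if the `(d-1)`-dimensional complex `Δ` admits a very free action of
`ℤ/pℤ` and `0 ≤ δ_i ≤ p-1` for `i = 1, …, d`, then there is a linear system of parameters
`Θ = (θ_1, …, θ_d)` for `k[Δ]` with `θ_i ∈ A_1^{δ_i}`, i.e. `g · θ_i = ζ^{δ_i} θ_i`. -/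
theorem stmt3_exists_graded_lsop
    (n d p : ℕ) (hp : p.Prime) (k : Type) [Field k] [Algebra ℂ k]
    (ζ : k) (hζ : IsPrimitiveRoot ζ p)
    (Δ : SC n) (hdim : Δ.hasDim d)
    (e : Equiv.Perm (Fin n)) (hvf : VeryFreeActionBy Δ e p)
    (δ : Fin d → ℕ) (hδ : ∀ i, δ i ≤ p - 1) :
    ∃ Θ : Fin d → MvPolynomial (Fin n) k,
      (∀ i, Θ i ∈ MvPolynomial.homogeneousSubmodule (Fin n) k 1) ∧
      (∀ i, MvPolynomial.rename ⇑e (Θ i) = ζ ^ (δ i) • Θ i) ∧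
      FiniteDimensional k
        (MvPolynomial (Fin n) k ⧸ (SRIdeal k Δ ⊔ Ideal.span (Set.range Θ))) := by
  classical
  haveI : Infinite k := Infinite.of_injective (algebraMap ℂ k) (algebraMap ℂ k).injective
  have hp0 : 0 < p := hp.pos
  have hζp : ζ ^ p = 1 := hζ.pow_eq_one
  have hζ0 : ζ ≠ 0 := by
    intro h
    rw [h, zero_pow hp.ne_zero] at hζp
    exact zero_ne_one hζp
  set δ' : ℕ → ℕ := fun j => if h : j < d then δ ⟨j, h⟩ else 0 with hδ'
  obtain ⟨θ, hθE, hθI⟩ := exists_chain p ζ e hvf hp0 δ' d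
  have hδ'eq : ∀ i : Fin d, δ' (i : ℕ) = δ i := by
    intro i
    simp only [hδ', dif_pos i.isLt, Fin.eta]
  set Θ : Fin d → MvPolynomial (Fin n) k := fun i => θ (i : ℕ) with hΘ
  set W : Submodule k (MvPolynomial (Fin n) k) :=
    span k (Set.range (X : Fin n → MvPolynomial (Fin n) k)) with hW
  have hWfr : Module.finrank k W = n := by
    rw [hW, finrank_span_eq_card (MvPolynomial.linearIndependent_X (Fin n) k)]
    simp
  haveI : FiniteDimensional k W :=
    FiniteDimensional.span_of_finite k (Set.finite_range _)
  have hyW : ∀ m v, yv p ζ e m v ∈ W := by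
    intro m v
    exact Submodule.sum_mem _ fun l _ => Submodule.smul_mem _ _
      (subset_span (Set.mem_range_self _))
  have hEW : ∀ m, Esp p ζ e m ≤ W := by
    intro m
    rw [Esp, span_le]
    rintro z ⟨v, rfl⟩
    exact hyW m v
  have hθW : ∀ i < d, θ i ∈ W := fun i hi => hEW _ (hθE i hi)
  have HS : ∀ σ ∈ Δ.faces, ∀ v ∈ σ, (X v : MvPolynomial (Fin n) k) ∈
      span k (Set.range Θ ∪ (X '' {w | w ∉ σ})) := by
    intro σ hσ v hv
    have hVW : Vsp θ σ d ≤ W := by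
      rw [Vsp, span_le]
      rintro z (⟨w, -, rfl⟩ | ⟨i, hi, rfl⟩)
      · exact subset_span (Set.mem_range_self _)
      · exact hθW i hi
    have hc : σ.card ≤ d := hdim.1 σ hσ
    have hcn : σ.card ≤ n := (Finset.card_le_univ _).trans_eq (by simp)
    have hfrV : n ≤ Module.finrank k (Vsp θ σ d) := by
      have h1 := hθI σ hσ
      have h2 : min d σ.card = σ.card := min_eq_right hc
      omega
    have hVeq : Vsp θ σ d = W :=
      Submodule.eq_of_le_of_finrank_le hVW (by rw [hWfr]; exact hfrV)
    have hXv : (X v : MvPolynomial (Fin n) k) ∈ Vsp θ σ d := by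
      rw [hVeq]
      exact subset_span (Set.mem_range_self _)
    have hset : ((X '' {w | w ∉ σ}) ∪ (θ '' Set.Iio d))
        = (Set.range Θ ∪ (X '' {w | w ∉ σ})) := by
      rw [Set.union_comm]
      congr 1
      ext z
      constructor
      · rintro ⟨i, hi, rfl⟩
        exact ⟨⟨i, hi⟩, rfl⟩
      · rintro ⟨i, rfl⟩
        exact ⟨(i : ℕ), i.isLt, rfl⟩
    rw [Vsp, hset] at hXv
    exact hXv
  refine ⟨Θ, ?_, ?_, ?_⟩
  · intro i
    have h1 : Esp p ζ e (δ' (i : ℕ)) ≤ homogeneousSubmodule (Fin n) k 1 := by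
      rw [Esp, span_le]
      rintro z ⟨v, rfl⟩
      exact yv_hom p ζ e _ v
    exact h1 (hθE (i : ℕ) i.isLt)
  · intro i
    set L : MvPolynomial (Fin n) k →ₗ[k] MvPolynomial (Fin n) k :=
      (rename ⇑e : MvPolynomial (Fin n) k →ₐ[k] MvPolynomial (Fin n) k).toLinearMap
        - (ζ ^ (δ i)) • LinearMap.id with hL
    have h1 : Esp p ζ e (δ i) ≤ LinearMap.ker L := by
      rw [Esp, span_le]
      rintro z ⟨v, rfl⟩
      rw [SetLike.mem_coe, LinearMap.mem_ker, hL, LinearMap.sub_apply,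
        LinearMap.smul_apply, LinearMap.id_apply, AlgHom.toLinearMap_apply]
      rw [yv_eig p ζ e hp0 hζp hζ0 hvf.1 (δ i) v, sub_self]
    have h2 : θ (i : ℕ) ∈ LinearMap.ker L := by
      refine h1 ?_
      have := hθE (i : ℕ) i.isLt
      rwa [hδ'eq i] at this
    rw [LinearMap.mem_ker, hL, LinearMap.sub_apply, LinearMap.smul_apply,
      LinearMap.id_apply, AlgHom.toLinearMap_apply, sub_eq_zero] at h2
    exact h2
  · exact fd_of_star hdim.1 Θ HS


end GroupActionsSR
end
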